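/- arXiv:1002.2054 — 3 statements merged into one kernel-verified Lean document; each statement's English description precedes it below -/
import Mathlib

section
/- Let n, d ≥ 1 and 0 ≤ t ≤ n(d−1) be integers. Then the partial sum ∑_{i=0}^{t} H(n,d,i) equals ∑_{i=0}^{n} (−1)^i · C(n,i) · C₀(t − d·i + n, n), where C₀(a,b) denotes the restricted binomial coefficient which equals C(a,b) when a ≥ b and 0 otherwise. -/
/-- `H n d t`: the number of vectors `(α₁,…,αₙ) ∈ ℕⁿ` with `∑ αᵢ = t` and
`0 ≤ αᵢ ≤ d−1` for all `i`. -/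
def polyCoeff (n d t : ℕ) : ℕ :=
  ((Finset.univ : Finset (Fin n → Fin d)).filter (fun α => ∑ i, (α i : ℕ) = t)).card

/-- Restricted binomial coefficient: `C₀(a,b) = C(a,b)` when `a ≥ b`, and `0` otherwise. -/
def C0 (a : ℤ) (b : ℕ) : ℤ := if (b : ℤ) ≤ a then ((a.toNat).choose b : ℤ) else 0

open Finset


/-- Functions `Fin n → ℕ` with sum at most `s`, as a finset. -/
def Dset (n s : ℕ) : Finset (Fin n → ℕ) :=
  (Finset.range (s+1)).biUnion (fun j => Finset.finAntidiagonal n j)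

lemma mem_Dset {n s : ℕ} {f : Fin n → ℕ} : f ∈ Dset n s ↔ ∑ i, f i ≤ s := by
  simp [Dset, Nat.lt_succ_iff]

lemma card_finAnti_succ (m s : ℕ) :
    (Finset.finAntidiagonal (m+1) s).card = (Dset m s).card := by
  apply Finset.card_nbij' (i := fun α => Fin.tail α)
    (j := fun β => Fin.cons (s - ∑ i, β i) β)
  · intro α hα
    simp only [Finset.mem_coe, Finset.mem_finAntidiagonal, Fin.sum_univ_succ] at hα ⊢
    rw [mem_Dset]
    simp only [Fin.tail]
    omega
  · intro β hβ
    simp only [Finset.mem_coe, mem_Dset] at hβ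
    simp only [Finset.mem_coe, Finset.mem_finAntidiagonal, Fin.sum_univ_succ, Fin.cons_zero,
      Fin.cons_succ]
    omega
  · intro α hα
    simp only [Finset.mem_coe, Finset.mem_finAntidiagonal, Fin.sum_univ_succ] at hα
    have h0 : α 0 = s - ∑ i, Fin.tail α i := by
      simp only [Fin.tail]; omega
    simp only [← h0, Fin.cons_self_tail]
  · intro β _
    simp [Fin.tail_cons]

lemma card_Dset (n s : ℕ) : (Dset n s).card = (s + n).choose n := by
  induction n generalizing s with
  | zero =>
    have : Dset 0 s = {fun _ => 0} := by
      ext f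
      simp only [mem_Dset, Finset.mem_singleton]
      constructor
      · intro _; funext i; exact absurd i.2 (by omega)
      · intro h; simp [h]
    simp [this]
  | succ m ih =>
    have hdisj : ∀ x ∈ Finset.range (s+1), ∀ y ∈ Finset.range (s+1), x ≠ y →
        Disjoint (Finset.finAntidiagonal (m+1) x) (Finset.finAntidiagonal (m+1) y) := by
      intro x _ y _ hxy
      rw [Finset.disjoint_left]
      intro f hfx hfy
      simp only [Finset.mem_finAntidiagonal] at hfx hfy
      exact hxy (hfx ▸ hfy)
    rw [Dset, Finset.card_biUnion hdisj]
    have : ∀ j, (Finset.finAntidiagonal (m+1) j).card = (j + m).choose m := by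
      intro j; rw [card_finAnti_succ, ih]
    simp only [this]
    have := Nat.sum_range_add_choose s m
    rw [this, ← add_assoc]

section
variable {ι σ : Type*} [DecidableEq σ] [Fintype σ]

lemma inf_filter_univ (T : Finset ι) (p : ι → σ → Prop) [∀ i, DecidablePred (p i)] :
    T.inf (fun i => Finset.univ.filter (p i)) =
      Finset.univ.filter (fun a => ∀ i ∈ T, p i a) := by
  classical
  induction T using Finset.induction_on with
  | empty => simp [Finset.inf_empty, Finset.top_eq_univ]
  | insert _ _ h ih =>
    rw [Finset.inf_insert, ih, Finset.inf_eq_inter]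
    ext a
    simp only [Finset.mem_inter, Finset.mem_filter, Finset.mem_univ, true_and,
      Finset.mem_insert]
    constructor
    · rintro ⟨h1, h2⟩ i (rfl | hi)
      · exact h1
      · exact h2 i hi
    · intro h
      exact ⟨h _ (Or.inl rfl), fun i hi => h i (Or.inr hi)⟩
end

lemma count_T (n d t : ℕ) (hd : 1 ≤ d) (T : Finset (Fin n)) :
    (((Finset.univ : Finset (Fin n → Fin (t+1))).filter
        (fun a => (∀ i ∈ T, d ≤ (a i : ℕ)) ∧ ∑ i, (a i : ℕ) ≤ t)).card : ℤ)
      = C0 ((t : ℤ) - d * T.card + n) n := by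
  obtain ⟨D, hD⟩ : ∃ m, d * T.card = m := ⟨_, rfl⟩
  have hdD : ∀ k, k ∈ T → d ≤ D := by
    intro k h
    have hT1 : 1 ≤ T.card := Finset.card_pos.mpr ⟨k, h⟩
    calc d = d * 1 := (mul_one d).symm
      _ ≤ d * T.card := Nat.mul_le_mul_left d hT1
      _ = D := hD
  have hcsum : ∑ k, (if k ∈ T then d else 0) = D := by
    rw [Finset.sum_ite_mem, Finset.univ_inter, Finset.sum_const, smul_eq_mul, mul_comm, hD]
  by_cases hdt : D ≤ t
  · have hcard : ((Finset.univ : Finset (Fin n → Fin (t+1))).filter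
        (fun a => (∀ i ∈ T, d ≤ (a i : ℕ)) ∧ ∑ i, (a i : ℕ) ≤ t)).card
        = (Dset n (t - D)).card := by
      apply Finset.card_nbij'
        (i := fun a k => (a k : ℕ) - (if k ∈ T then d else 0))
        (j := fun β k => (⟨(β k + (if k ∈ T then d else 0)) % (t+1),
          Nat.mod_lt _ (Nat.succ_pos t)⟩ : Fin (t+1)))
      · intro a ha
        simp only [Finset.mem_coe, Finset.mem_filter, Finset.mem_univ, true_and] at ha
        obtain ⟨h1, h2⟩ := ha
        have hc : ∀ k, (if k ∈ T then d else 0) ≤ (a k : ℕ) := by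
          intro k
          by_cases h : k ∈ T
          · simpa [h] using h1 k h
          · simp [h]
        have hsplit : ∑ k, ((a k : ℕ) - (if k ∈ T then d else 0))
            + ∑ k, (if k ∈ T then d else 0) = ∑ k, (a k : ℕ) := by
          rw [← Finset.sum_add_distrib]
          exact Finset.sum_congr rfl fun k _ => Nat.sub_add_cancel (hc k)
        simp only [Finset.mem_coe, mem_Dset]
        omega
      · intro β hβ
        simp only [Finset.mem_coe, mem_Dset] at hβ
        have hβk : ∀ k, β k + (if k ∈ T then d else 0) ≤ t := by
          intro k
          have h1 : β k ≤ t - D :=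
            le_trans (Finset.single_le_sum (f := β) (fun i _ => Nat.zero_le _)
              (Finset.mem_univ k)) hβ
          have h2 : (if k ∈ T then d else 0) ≤ D := by
            by_cases h : k ∈ T
            · simpa [h] using hdD k h
            · simp [h]
          omega
        have hmod : ∀ k, (β k + (if k ∈ T then d else 0)) % (t+1)
            = β k + (if k ∈ T then d else 0) := fun k => Nat.mod_eq_of_lt (by have := hβk k; omega)
        simp only [Finset.mem_coe, Finset.mem_filter, Finset.mem_univ, true_and]
        refine ⟨fun i hi => ?_, ?_⟩
        · show d ≤ (β i + (if i ∈ T then d else 0)) % (t+1)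
          rw [hmod i, if_pos hi]
          omega
        · calc ∑ k, ((⟨(β k + (if k ∈ T then d else 0)) % (t+1),
              Nat.mod_lt _ (Nat.succ_pos t)⟩ : Fin (t+1)) : ℕ)
              = ∑ k, (β k + (if k ∈ T then d else 0)) :=
                Finset.sum_congr rfl fun k _ => hmod k
            _ = ∑ k, β k + ∑ k, (if k ∈ T then d else 0) := Finset.sum_add_distrib
            _ ≤ t := by omega
      · intro a ha
        simp only [Finset.mem_coe, Finset.mem_filter, Finset.mem_univ, true_and] at ha
        funext k
        apply Fin.ext
        show ((((a k : ℕ) - (if k ∈ T then d else 0)) + (if k ∈ T then d else 0)) % (t+1))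
          = (a k : ℕ)
        have hc : (if k ∈ T then d else 0) ≤ (a k : ℕ) := by
          by_cases h : k ∈ T
          · simpa [h] using ha.1 k h
          · simp [h]
        rw [Nat.sub_add_cancel hc, Nat.mod_eq_of_lt (a k).isLt]
      · intro β hβ
        simp only [Finset.mem_coe, mem_Dset] at hβ
        funext k
        show ((β k + (if k ∈ T then d else 0)) % (t+1)) - (if k ∈ T then d else 0) = β k
        have h1 : β k ≤ t - D :=
          le_trans (Finset.single_le_sum (f := β) (fun i _ => Nat.zero_le _)
            (Finset.mem_univ k)) hβ
        have h2 : (if k ∈ T then d else 0) ≤ D := by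
          by_cases h : k ∈ T
          · simpa [h] using hdD k h
          · simp [h]
        rw [Nat.mod_eq_of_lt (by omega)]
        omega
    have hcast : ((d : ℤ)) * (T.card : ℤ) = (D : ℤ) := by exact_mod_cast hD
    rw [hcard, card_Dset]
    unfold C0
    rw [hcast]
    have h1 : (n : ℤ) ≤ (t : ℤ) - D + n := by clear hcsum hdD hcast hcard; omega
    rw [if_pos h1]
    have h3 : ((t : ℤ) - (D:ℤ) + (n:ℤ)).toNat = t - D + n := by clear hcsum hdD hcast hcard; omega
    rw [h3]
  · have hempty : ((Finset.univ : Finset (Fin n → Fin (t+1))).filter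
        (fun a => (∀ i ∈ T, d ≤ (a i : ℕ)) ∧ ∑ i, (a i : ℕ) ≤ t)) = ∅ := by
      rw [Finset.filter_eq_empty_iff]
      intro a _
      rintro ⟨h1, h2⟩
      have hle : d * T.card ≤ ∑ i ∈ T, (a i : ℕ) := by
        calc d * T.card = T.card • d := by rw [smul_eq_mul, mul_comm]
          _ ≤ ∑ i ∈ T, (a i : ℕ) := Finset.card_nsmul_le_sum T _ d h1
      have hle2 : ∑ i ∈ T, (a i : ℕ) ≤ ∑ i, (a i : ℕ) :=
        Finset.sum_le_sum_of_subset (Finset.subset_univ T)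
      omega
    have hcast : ((d : ℤ)) * (T.card : ℤ) = (D : ℤ) := by exact_mod_cast hD
    rw [hempty]
    unfold C0
    rw [hcast]
    have h1 : ¬ ((n : ℤ) ≤ (t : ℤ) - D + n) := by omega
    rw [if_neg h1]
    simp

lemma polyCoeff_eq (n d t j : ℕ) (hd : 1 ≤ d) (hj : j ≤ t) :
    polyCoeff n d j = ((Finset.univ : Finset (Fin n → Fin (t+1))).filter
      (fun a => (∀ i, (a i : ℕ) < d) ∧ ∑ i, (a i : ℕ) = j)).card := by
  unfold polyCoeff
  apply Finset.card_nbij'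
    (i := fun b k => (⟨(b k : ℕ) % (t+1), Nat.mod_lt _ (Nat.succ_pos t)⟩ : Fin (t+1)))
    (j := fun a k => (⟨(a k : ℕ) % d, Nat.mod_lt _ hd⟩ : Fin d))
  · intro b hb
    simp only [Finset.mem_coe, Finset.mem_filter, Finset.mem_univ, true_and] at hb
    have hble : ∀ k, (b k : ℕ) ≤ t := by
      intro k
      have h0 : (b k : ℕ) ≤ ∑ i, (b i : ℕ) :=
        Finset.single_le_sum (f := fun i => (b i : ℕ)) (fun i _ => Nat.zero_le _)
          (Finset.mem_univ k)
      omega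
    have hmod : ∀ k, (b k : ℕ) % (t+1) = (b k : ℕ) := fun k =>
      Nat.mod_eq_of_lt (by have := hble k; omega)
    simp only [Finset.mem_coe, Finset.mem_filter, Finset.mem_univ, true_and]
    refine ⟨fun i => ?_, ?_⟩
    · show (b i : ℕ) % (t+1) < d
      rw [hmod i]; exact (b i).isLt
    · calc ∑ k, (((⟨(b k : ℕ) % (t+1), Nat.mod_lt _ (Nat.succ_pos t)⟩ : Fin (t+1))) : ℕ)
          = ∑ k, (b k : ℕ) := Finset.sum_congr rfl fun k _ => hmod k
        _ = j := hb
  · intro a ha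
    simp only [Finset.mem_coe, Finset.mem_filter, Finset.mem_univ, true_and] at ha
    have hmod : ∀ k, (a k : ℕ) % d = (a k : ℕ) := fun k => Nat.mod_eq_of_lt (ha.1 k)
    simp only [Finset.mem_coe, Finset.mem_filter, Finset.mem_univ, true_and]
    calc ∑ k, (((⟨(a k : ℕ) % d, Nat.mod_lt _ hd⟩ : Fin d)) : ℕ)
        = ∑ k, (a k : ℕ) := Finset.sum_congr rfl fun k _ => hmod k
      _ = j := ha.2
  · intro b hb
    simp only [Finset.mem_coe, Finset.mem_filter, Finset.mem_univ, true_and] at hb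
    have hble : ∀ k, (b k : ℕ) ≤ t := by
      intro k
      have h0 : (b k : ℕ) ≤ ∑ i, (b i : ℕ) :=
        Finset.single_le_sum (f := fun i => (b i : ℕ)) (fun i _ => Nat.zero_le _)
          (Finset.mem_univ k)
      omega
    funext k
    apply Fin.ext
    show ((b k : ℕ) % (t+1)) % d = (b k : ℕ)
    have h1 : (b k : ℕ) % (t+1) = (b k : ℕ) := Nat.mod_eq_of_lt (by have := hble k; omega)
    rw [h1, Nat.mod_eq_of_lt (b k).isLt]
  · intro a ha
    simp only [Finset.mem_coe, Finset.mem_filter, Finset.mem_univ, true_and] at ha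
    funext k
    apply Fin.ext
    show ((a k : ℕ) % d) % (t+1) = (a k : ℕ)
    have h1 : (a k : ℕ) % d = (a k : ℕ) := Nat.mod_eq_of_lt (ha.1 k)
    rw [h1, Nat.mod_eq_of_lt (a k).isLt]

lemma lhs_count (n d t : ℕ) (hd : 1 ≤ d) :
    ∑ i ∈ Finset.range (t+1), polyCoeff n d i =
      ((Finset.univ : Finset (Fin n → Fin (t+1))).filter
        (fun a => (∀ i, (a i : ℕ) < d) ∧ ∑ i, (a i : ℕ) ≤ t)).card := by
  have hsplit : ((Finset.univ : Finset (Fin n → Fin (t+1))).filter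
        (fun a => (∀ i, (a i : ℕ) < d) ∧ ∑ i, (a i : ℕ) ≤ t))
      = (Finset.range (t+1)).biUnion (fun j => (Finset.univ.filter
        (fun a => (∀ i, (a i : ℕ) < d) ∧ ∑ i, (a i : ℕ) = j))) := by
    ext a
    simp only [Finset.mem_filter, Finset.mem_univ, true_and, Finset.mem_biUnion,
      Finset.mem_range, Nat.lt_succ_iff]
    constructor
    · rintro ⟨h1, h2⟩
      exact ⟨∑ i, (a i : ℕ), h2, h1, rfl⟩
    · rintro ⟨j, hj, h1, h2⟩
      exact ⟨h1, h2 ▸ hj⟩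
  rw [hsplit, Finset.card_biUnion]
  · exact Finset.sum_congr rfl fun j hj =>
      polyCoeff_eq n d t j hd (Nat.lt_succ_iff.mp (Finset.mem_range.mp hj))
  · intro x _ y _ hxy
    rw [Function.onFun, Finset.disjoint_left]
    intro a hax hay
    simp only [Finset.mem_filter] at hax hay
    exact hxy (hax.2.2 ▸ hay.2.2)

theorem sum_polyCoeff_eq (n d t : ℕ) (hn : 1 ≤ n) (hd : 1 ≤ d) (ht : t ≤ n * (d - 1)) :
    (∑ i ∈ Finset.range (t + 1), (polyCoeff n d i : ℤ)) =
      ∑ i ∈ Finset.range (n + 1),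
        (-1) ^ i * (n.choose i : ℤ) * C0 ((t : ℤ) - d * i + n) n := by
  classical
  set σ := (Fin n → Fin (t+1))
  set S : Fin n → Finset σ := fun i => Finset.univ.filter (fun a => d ≤ (a i : ℕ)) with hS
  set f : σ → ℤ := fun a => if ∑ i, (a i : ℕ) ≤ t then (1 : ℤ) else 0 with hf
  have IE := Finset.inclusion_exclusion_sum_inf_compl (univ : Finset (Fin n)) S f
  -- left side of IE
  have hL : ∑ a ∈ (Finset.univ : Finset (Fin n)).inf (fun i => (S i)ᶜ), f a
      = ((Finset.univ : Finset σ).filter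
          (fun a => (∀ i, (a i : ℕ) < d) ∧ ∑ i, (a i : ℕ) ≤ t)).card := by
    have h1 : (Finset.univ : Finset (Fin n)).inf (fun i => (S i)ᶜ)
        = (Finset.univ : Finset σ).filter (fun a => ∀ i, ¬ d ≤ (a i : ℕ)) := by
      have h2 : (fun i : Fin n => (S i)ᶜ)
          = fun i : Fin n => (Finset.univ : Finset σ).filter (fun a => ¬ d ≤ (a i : ℕ)) := by
        funext i
        rw [hS]
        exact Finset.compl_filter _
      rw [h2, inf_filter_univ]
      ext a
      simp
    rw [h1, hf, Finset.sum_boole, Finset.filter_filter]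
    congr 2
    ext a
    simp only [Finset.mem_filter, Finset.mem_univ, true_and]
    constructor
    · rintro ⟨h1', h2'⟩; exact ⟨fun i => by have := h1' i; omega, h2'⟩
    · rintro ⟨h1', h2'⟩; exact ⟨fun i => by have := h1' i; omega, h2'⟩
  -- right side of IE
  have hR : ∀ T ∈ (Finset.univ : Finset (Fin n)).powerset,
      (-1 : ℤ) ^ T.card • ∑ a ∈ T.inf S, f a
        = (-1 : ℤ) ^ T.card * C0 ((t : ℤ) - d * T.card + n) n := by
    intro T _
    rw [smul_eq_mul]
    congr 1
    have h1 : T.inf S = (Finset.univ : Finset σ).filter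
        (fun a => ∀ i ∈ T, d ≤ (a i : ℕ)) := by
      rw [hS, inf_filter_univ]
      ext a
      simp
    rw [h1, hf, Finset.sum_boole, Finset.filter_filter]
    rw [← count_T n d t hd T]
  rw [← Nat.cast_sum, lhs_count n d t hd, ← hL, IE, Finset.sum_congr rfl hR]
  have hgroup := Finset.sum_powerset_apply_card
    (f := fun m => (-1 : ℤ) ^ m * C0 ((t : ℤ) - d * m + n) n)
    (x := (Finset.univ : Finset (Fin n)))
  rw [hgroup, Finset.card_univ, Fintype.card_fin]
  apply Finset.sum_congr rfl
  intro m _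
  rw [nsmul_eq_mul]
  ring
end

section
/- Let n ≥ 1 and 0 ≤ t ≤ n be integers. Then I_n(t) = C(n+t−1, t) + ∑_{j≥1} (−1)^j · C(n + t − u_j − j − 1, t − u_j − j) + ∑_{j≥1} (−1)^j · C(n + t − u_j − 1, t − u_j), where u_j = j(3j−1)/2 is the j-th pentagonal number and binomial coefficients C(a,b) with b < 0 are interpreted as 0 (so both sums are finite). -/
/-- The number of inversions of a permutation of `Fin n`. -/
def invCount {n : ℕ} (π : Equiv.Perm (Fin n)) : ℕ :=
  ((Finset.univ : Finset (Fin n × Fin n)).filter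
    (fun p => p.1 < p.2 ∧ π p.2 < π p.1)).card

/-- `I n t`: the number of permutations of `{1,…,n}` with exactly `t` inversions. -/
def invNum (n t : ℕ) : ℕ :=
  ((Finset.univ : Finset (Equiv.Perm (Fin n))).filter (fun π => invCount π = t)).card

/-- The `j`-th pentagonal number `u_j = j(3j−1)/2`. -/
def pent (j : ℕ) : ℕ := j * (3 * j - 1) / 2

/-- Binomial coefficient `C(a,b)` for integer arguments, interpreted as `0` when `b < 0`
(and in general `0` unless `0 ≤ b ≤ a`). -/
def Cb (a b : ℤ) : ℤ :=
  if 0 ≤ b then ((a.toNat).choose b.toNat : ℤ) else 0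

open Finset Equiv

namespace NK


lemma invCount_eq_sum {n : ℕ} (σ : Equiv.Perm (Fin n)) :
    invCount σ = ∑ i : Fin n, ∑ j : Fin n, if i < j ∧ σ j < σ i then 1 else 0 := by
  rw [invCount, card_filter]
  exact Fintype.sum_prod_type _

/-- the function underlying insertion -/
def insFun {n : ℕ} (e : Equiv.Perm (Fin n)) (p : Fin (n+1)) : Fin (n+1) → Fin (n+1) :=
  p.insertNth (Fin.last n) (fun j => (e j).castSucc)

lemma insFun_injective {n : ℕ} (e : Equiv.Perm (Fin n)) (p : Fin (n+1)) :
    Function.Injective (insFun e p) := by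
  intro x y hxy
  rcases eq_or_ne x p with hx | hx
  · rcases eq_or_ne y p with hy | hy
    · rw [hx, hy]
    · obtain ⟨j, hj⟩ := Fin.exists_succAbove_eq hy
      rw [hx, ← hj, insFun, Fin.insertNth_apply_same, Fin.insertNth_apply_succAbove] at hxy
      exact absurd hxy.symm (Fin.castSucc_lt_last (e j)).ne
  · obtain ⟨i, hi⟩ := Fin.exists_succAbove_eq hx
    rcases eq_or_ne y p with hy | hy
    · rw [hy, ← hi, insFun, Fin.insertNth_apply_same, Fin.insertNth_apply_succAbove] at hxy
      exact absurd hxy (Fin.castSucc_lt_last (e i)).ne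
    · obtain ⟨j, hj⟩ := Fin.exists_succAbove_eq hy
      rw [← hi, ← hj, insFun, Fin.insertNth_apply_succAbove,
        Fin.insertNth_apply_succAbove] at hxy
      rw [← hi, ← hj, e.injective (Fin.castSucc_injective _ hxy)]

/-- insertion as a permutation -/
noncomputable def ins {n : ℕ} (e : Equiv.Perm (Fin n)) (p : Fin (n+1)) :
    Equiv.Perm (Fin (n+1)) :=
  Equiv.ofBijective _ ((Finite.injective_iff_bijective).mp (insFun_injective e p))

@[simp] lemma ins_apply {n : ℕ} (e : Equiv.Perm (Fin n)) (p : Fin (n+1)) (x : Fin (n+1)) :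
    ins e p x = insFun e p x := rfl

@[simp] lemma ins_apply_same {n : ℕ} (e : Equiv.Perm (Fin n)) (p : Fin (n+1)) :
    ins e p p = Fin.last n := by
  rw [ins_apply, insFun]; exact Fin.insertNth_apply_same p _ _

@[simp] lemma ins_apply_succAbove {n : ℕ} (e : Equiv.Perm (Fin n)) (p : Fin (n+1)) (j : Fin n) :
    ins e p (p.succAbove j) = (e j).castSucc := by
  rw [ins_apply, insFun]; exact Fin.insertNth_apply_succAbove p _ _ j

lemma card_le_fin {n : ℕ} (p : Fin (n+1)) :
    (∑ b : Fin n, if p ≤ (b : Fin n).castSucc then 1 else 0) = n - p := by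
  have h : ∀ b : Fin n, (if p ≤ b.castSucc then 1 else 0)
      = if (p:ℕ) ≤ (b : ℕ) then 1 else 0 := by
    intro b; simp [Fin.le_def]
  rw [Finset.sum_congr rfl (fun b _ => h b),
    Fin.sum_univ_eq_sum_range (fun i : ℕ => if (p:ℕ) ≤ i then 1 else 0) n]
  rw [← Finset.card_filter]
  have : (range n).filter (fun i => (p:ℕ) ≤ i) = Finset.Ico (p:ℕ) n := by
    ext i; simp [Finset.mem_Ico]; omega
  rw [this, Nat.card_Ico]

lemma invCount_ins {n : ℕ} (e : Equiv.Perm (Fin n)) (p : Fin (n+1)) :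
    invCount (ins e p) = invCount e + (n - p) := by
  rw [invCount_eq_sum, Fin.sum_univ_succAbove _ p]
  have h0 : ∑ j : Fin (n+1), (if p < j ∧ ins e p j < ins e p p then 1 else 0)
      = n - p := by
    rw [Fin.sum_univ_succAbove _ p]
    have hpp : (if p < p ∧ ins e p p < ins e p p then 1 else 0) = 0 := by simp
    rw [hpp, zero_add, ← card_le_fin p]
    refine Finset.sum_congr rfl fun b _ => ?_
    congr 1
    rw [ins_apply_same, ins_apply_succAbove]
    simp only [Fin.castSucc_lt_last, and_true]
    rw [Fin.lt_succAbove_iff_le_castSucc]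
  have h1 : ∀ a : Fin n, (∑ j : Fin (n+1),
      (if p.succAbove a < j ∧ ins e p j < ins e p (p.succAbove a) then 1 else 0))
      = ∑ b : Fin n, (if a < b ∧ e b < e a then 1 else 0) := by
    intro a
    rw [Fin.sum_univ_succAbove _ p]
    have hap : (if p.succAbove a < p ∧ ins e p p < ins e p (p.succAbove a) then 1 else 0)
        = 0 := by
      simp only [ins_apply_same, ins_apply_succAbove]
      have : ¬ (Fin.last n < (e a).castSucc) := by
        exact not_lt_of_ge (Fin.castSucc_lt_last (e a)).le
      simp [this]
    rw [hap, zero_add]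
    refine Finset.sum_congr rfl fun b _ => ?_
    congr 1
    rw [ins_apply_succAbove, ins_apply_succAbove]
    rw [Fin.succAbove_lt_succAbove_iff, Fin.castSucc_lt_castSucc_iff]
  rw [h0]
  have : ∑ a : Fin n, (∑ j : Fin (n+1),
      (if p.succAbove a < j ∧ ins e p j < ins e p (p.succAbove a) then 1 else 0))
      = invCount e := by
    rw [invCount_eq_sum]
    exact Finset.sum_congr rfl fun a _ => h1 a
  rw [this, add_comm]





noncomputable def outPerm {n : ℕ} (σ : Equiv.Perm (Fin (n+1))) : Equiv.Perm (Fin n) :=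
  Equiv.ofBijective (fun j =>
    (σ ((σ.symm (Fin.last n)).succAbove j)).castPred (by
      intro h
      have h2 : σ ((σ.symm (Fin.last n)).succAbove j) = σ (σ.symm (Fin.last n)) := by
        rw [h, Equiv.apply_symm_apply]
      exact Fin.succAbove_ne _ j (σ.injective h2)))
    ((Finite.injective_iff_bijective).mp (by
      intro a b hab
      have : σ ((σ.symm (Fin.last n)).succAbove a) = σ ((σ.symm (Fin.last n)).succAbove b) := by
        have := congrArg Fin.val hab
        simp only [Fin.coe_castPred] at this
        exact Fin.val_injective this
      exact (Fin.succAbove_right_injective) (σ.injective this)))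

lemma outPerm_val {n : ℕ} (σ : Equiv.Perm (Fin (n+1))) (j : Fin n) :
    ((outPerm σ j : Fin n) : ℕ) = ((σ ((σ.symm (Fin.last n)).succAbove j)) : ℕ) := by
  simp [outPerm, Equiv.ofBijective]

noncomputable def insEquiv (n : ℕ) :
    (Equiv.Perm (Fin n) × Fin (n+1)) ≃ Equiv.Perm (Fin (n+1)) where
  toFun ep := ins ep.1 ep.2
  invFun σ := (outPerm σ, σ.symm (Fin.last n))
  left_inv := by
    rintro ⟨e, p⟩
    have hsymm : (ins e p).symm (Fin.last n) = p :=
      Equiv.symm_apply_eq _ |>.mpr (ins_apply_same e p).symm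
    refine Prod.ext ?_ hsymm
    · ext j
      rw [outPerm_val, hsymm, ins_apply_succAbove]
      rfl
  right_inv := by
    intro σ
    ext x
    rcases eq_or_ne x (σ.symm (Fin.last n)) with hx | hx
    · rw [hx, ins_apply_same, Equiv.apply_symm_apply]
    · obtain ⟨j, hj⟩ := Fin.exists_succAbove_eq hx
      rw [← hj]
      have h2 := ins_apply_succAbove (outPerm σ) (σ.symm (Fin.last n)) j
      show ((ins (outPerm σ) (σ.symm (Fin.last n))) ((σ.symm (Fin.last n)).succAbove j) : ℕ) = _
      rw [h2, Fin.coe_castSucc, outPerm_val]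

lemma sum_perm_invCount_add {n t k : ℕ} :
    (∑ e : Equiv.Perm (Fin n), if invCount e + k = t then 1 else 0)
      = if k ≤ t then invNum n (t - k) else 0 := by
  by_cases hk : k ≤ t
  · rw [if_pos hk, invNum, card_filter]
    refine Finset.sum_congr rfl fun e _ => ?_
    congr 1
    simp only [eq_iff_iff]
    omega
  · rw [if_neg hk]
    refine Finset.sum_eq_zero fun e _ => ?_
    rw [if_neg (by omega)]

lemma invNum_succ (n t : ℕ) :
    invNum (n+1) t = ∑ k ∈ Finset.range (n+1), if k ≤ t then invNum n (t - k) else 0 := by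
  rw [invNum, card_filter,
    ← Equiv.sum_comp (insEquiv n) (fun σ => if invCount σ = t then 1 else 0),
    Fintype.sum_prod_type, Finset.sum_comm]
  have h1 : ∀ p : Fin (n+1), (∑ e : Equiv.Perm (Fin n),
      if invCount ((insEquiv n) (e, p)) = t then 1 else 0)
      = if n - (p:ℕ) ≤ t then invNum n (t - (n - (p:ℕ))) else 0 := by
    intro p
    rw [← sum_perm_invCount_add]
    refine Finset.sum_congr rfl fun e _ => ?_
    congr 1
    simp only [eq_iff_iff]
    have : invCount ((insEquiv n) (e, p)) = invCount e + (n - (p:ℕ)) := invCount_ins e p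
    rw [this]
  rw [Finset.sum_congr rfl (fun p _ => h1 p)]
  rw [Fin.sum_univ_eq_sum_range (fun i => if n - i ≤ t then invNum n (t - (n - i)) else 0) (n+1)]
  have := Finset.sum_range_reflect (fun k => if k ≤ t then invNum n (t - k) else 0) (n+1)
  rw [← this]
  refine Finset.sum_congr rfl fun i hi => ?_
  simp only [Nat.add_sub_cancel]

lemma invNum_zero (t : ℕ) : invNum 0 t = if t = 0 then 1 else 0 := by
  have hc : ∀ σ : Equiv.Perm (Fin 0), invCount σ = 0 := by
    intro σ
    simp [invCount]
  rw [invNum]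
  by_cases ht : t = 0
  · subst ht
    rw [if_pos rfl]
    rw [Finset.filter_true_of_mem (fun σ _ => hc σ)]
    simp [Finset.card_univ]
  · rw [if_neg ht, Finset.card_eq_zero, Finset.filter_eq_empty_iff]
    intro σ _
    rw [hc σ]
    omega




noncomputable def Phi (n : ℕ) : PowerSeries ℤ :=
  ∏ k ∈ Finset.range n, ∑ i ∈ Finset.range (k+1), (PowerSeries.X : PowerSeries ℤ)^i

noncomputable def eul (n : ℕ) : PowerSeries ℤ :=
  ∏ k ∈ Finset.range n, (1 - (PowerSeries.X : PowerSeries ℤ)^(k+1))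

lemma coeff_geom (m r : ℕ) :
    (PowerSeries.coeff r) (∑ i ∈ Finset.range m, (PowerSeries.X : PowerSeries ℤ)^i)
      = if r < m then 1 else 0 := by
  rw [map_sum]
  simp_rw [PowerSeries.coeff_X_pow]
  rw [Finset.sum_ite_eq (Finset.range m) r (fun _ => (1:ℤ))]
  simp [Finset.mem_range]

lemma coeff_Phi (n t : ℕ) : (PowerSeries.coeff t) (Phi n) = (invNum n t : ℤ) := by
  induction n generalizing t with
  | zero =>
    rw [Phi, Finset.prod_range_zero, invNum_zero, PowerSeries.coeff_one]
    split <;> simp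
  | succ n ih =>
    rw [Phi, Finset.prod_range_succ, ← Phi, PowerSeries.coeff_mul,
      Finset.Nat.sum_antidiagonal_eq_sum_range_succ_mk]
    simp_rw [ih, coeff_geom]
    -- now: ∑ k ∈ range (t+1), invNum n k * ite (t - k < n + 1) 1 0 = invNum (n+1) t
    have step1 : ∀ k ∈ Finset.range (t+1),
        (invNum n k : ℤ) * (if t - k < n + 1 then (1:ℤ) else 0)
        = (fun j => if t - j ≤ n then (invNum n j : ℤ) else 0) k := by
      intro k _
      by_cases h : t - k ≤ n
      · simp [h, Nat.lt_succ_iff]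
      · simp [h, Nat.lt_succ_iff]
    rw [Finset.sum_congr rfl step1]
    have step2 := Finset.sum_range_reflect
      (fun j => if t - j ≤ n then (invNum n j : ℤ) else 0) (t+1)
    rw [← step2]
    -- LHS now: ∑ k ∈ range (t+1), ite (t - (t - k) ≤ n) invNum n (t - k) 0
    have step3 : ∀ k ∈ Finset.range (t+1),
        (fun j => if t - j ≤ n then (invNum n j : ℤ) else 0) (t + 1 - 1 - k)
        = (if k ≤ t ∧ k ≤ n then (invNum n (t - k) : ℤ) else 0) := by
      intro k hk
      rw [Finset.mem_range] at hk
      simp only []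
      have h1 : t + 1 - 1 - k = t - k := by omega
      rw [h1]
      have h2 : (t - (t - k) ≤ n) ↔ (k ≤ t ∧ k ≤ n) ∨ (t ≤ n ∧ t < k) := by omega
      by_cases h : k ≤ t ∧ k ≤ n
      · rw [if_pos h, if_pos (h2.mpr (Or.inl h))]
      · rw [if_neg h, if_neg (by omega)]
    rw [Finset.sum_congr rfl step3]
    -- extend to range (n + t + 2) and compare with invNum_succ
    have ext1 : ∑ k ∈ Finset.range (t+1), (if k ≤ t ∧ k ≤ n then (invNum n (t - k) : ℤ) else 0)
        = ∑ k ∈ Finset.range (n + t + 2), (if k ≤ t ∧ k ≤ n then (invNum n (t - k) : ℤ) else 0) := by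
      refine Finset.sum_subset (by intro x hx; simp at *; omega) ?_
      intro x _ hx
      rw [Finset.mem_range, not_lt] at hx
      rw [if_neg (by omega)]
    have ext2 : ∑ k ∈ Finset.range (n+1), (if k ≤ t ∧ k ≤ n then (invNum n (t - k) : ℤ) else 0)
        = ∑ k ∈ Finset.range (n + t + 2), (if k ≤ t ∧ k ≤ n then (invNum n (t - k) : ℤ) else 0) := by
      refine Finset.sum_subset (by intro x hx; simp at *; omega) ?_
      intro x _ hx
      rw [Finset.mem_range, not_lt] at hx
      rw [if_neg (by omega)]
    rw [ext1, ← ext2]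
    rw [invNum_succ]
    push_cast
    refine Finset.sum_congr rfl fun k hk => ?_
    rw [Finset.mem_range] at hk
    by_cases h : k ≤ t
    · rw [if_pos h, if_pos ⟨h, by omega⟩]
    · rw [if_neg h, if_neg (by omega)]

lemma Phi_mul_eul (n : ℕ) :
    Phi n * (1 - (PowerSeries.X : PowerSeries ℤ))^n = eul n := by
  have hc : (1 - (PowerSeries.X : PowerSeries ℤ))^n
      = ∏ _k ∈ Finset.range n, (1 - (PowerSeries.X : PowerSeries ℤ)) := by
    rw [Finset.prod_const, Finset.card_range]
  rw [Phi, eul, hc, ← Finset.prod_mul_distrib]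
  refine Finset.prod_congr rfl fun k _ => ?_
  have h := geom_sum_mul (PowerSeries.X : PowerSeries ℤ) (k+1)
  linear_combination -h

lemma invNum_eq_sum_coeff_eul (n t : ℕ) (hn : 1 ≤ n) :
    (invNum n t : ℤ) = ∑ p ∈ Finset.HasAntidiagonal.antidiagonal t,
      (PowerSeries.coeff p.1) (eul n) * ((n - 1 + p.2).choose (n-1) : ℤ) := by
  have hu : Phi n = eul n * (PowerSeries.invOneSubPow ℤ n).val := by
    have h1 : ((PowerSeries.invOneSubPow ℤ n).inv : PowerSeries ℤ)
        * (PowerSeries.invOneSubPow ℤ n).val = 1 := (PowerSeries.invOneSubPow ℤ n).inv_val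
    calc Phi n = Phi n * (((PowerSeries.invOneSubPow ℤ n).inv : PowerSeries ℤ)
          * (PowerSeries.invOneSubPow ℤ n).val) := by rw [h1, mul_one]
    _ = (Phi n * (1 - PowerSeries.X)^n) * (PowerSeries.invOneSubPow ℤ n).val := by
          rw [PowerSeries.invOneSubPow_inv_eq_one_sub_pow]; ring
    _ = eul n * (PowerSeries.invOneSubPow ℤ n).val := by rw [Phi_mul_eul]
  rw [← coeff_Phi, hu, PowerSeries.coeff_mul]
  refine Finset.sum_congr rfl fun p _ => ?_
  congr 1
  rw [PowerSeries.invOneSubPow_val_eq_mk_sub_one_add_choose_of_pos ℤ n (by omega),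
    PowerSeries.coeff_mk]



noncomputable def mn (S : Finset ℕ) : ℕ := if h : S.Nonempty then S.min' h else 0
noncomputable def mx (S : Finset ℕ) : ℕ := if h : S.Nonempty then S.max' h else 0

lemma mn_mem {S : Finset ℕ} (h : S.Nonempty) : mn S ∈ S := by
  rw [mn, dif_pos h]; exact S.min'_mem h

lemma mn_le {S : Finset ℕ} (h : S.Nonempty) {x : ℕ} (hx : x ∈ S) : mn S ≤ x := by
  rw [mn, dif_pos h]; exact S.min'_le x hx

lemma mx_mem {S : Finset ℕ} (h : S.Nonempty) : mx S ∈ S := by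
  rw [mx, dif_pos h]; exact S.max'_mem h

lemma le_mx {S : Finset ℕ} (h : S.Nonempty) {x : ℕ} (hx : x ∈ S) : x ≤ mx S := by
  rw [mx, dif_pos h]; exact S.le_max' x hx

lemma mn_eq {S : Finset ℕ} {a : ℕ} (ha : a ∈ S) (hb : ∀ x ∈ S, a ≤ x) : mn S = a :=
  le_antisymm (mn_le ⟨a, ha⟩ ha) (hb _ (mn_mem ⟨a, ha⟩))

lemma mx_eq {S : Finset ℕ} {a : ℕ} (ha : a ∈ S) (hb : ∀ x ∈ S, x ≤ a) : mx S = a :=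
  le_antisymm (hb _ (mx_mem ⟨a, ha⟩)) (le_mx ⟨a, ha⟩ ha)

noncomputable def sig (S : Finset ℕ) : ℕ :=
  if h : (∃ k, k < mx S ∧ mx S - (k+1) ∉ S) then Nat.find h + 1 else mx S + 1

lemma sig_spec {S : Finset ℕ} (h : S.Nonempty) (h0 : ∀ x ∈ S, 1 ≤ x) :
    1 ≤ sig S ∧ sig S ≤ mx S ∧
      (∀ x, 1 ≤ x → x ≤ mx S → mx S < x + sig S → x ∈ S) ∧ (mx S - sig S ∉ S) := by
  have hM1 : 1 ≤ mx S := h0 _ (mx_mem h)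
  have hex : ∃ k, k < mx S ∧ mx S - (k+1) ∉ S := by
    refine ⟨mx S - 1, by omega, ?_⟩
    have : mx S - (mx S - 1 + 1) = 0 := by omega
    rw [this]
    intro h0'
    exact absurd (h0 _ h0') (by omega)
  rw [sig, dif_pos hex]
  obtain ⟨hd1, hd2⟩ := Nat.find_spec hex
  set d := Nat.find hex with hdd
  refine ⟨by omega, by omega, ?_, ?_⟩
  · intro x hx1 hx2 hx3
    rcases eq_or_lt_of_le hx2 with heq | hlt
    · rw [heq]; exact mx_mem h
    · have hj : mx S - x - 1 < d := by omega
      have := Nat.find_min hex hj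
      push_neg at this
      have hlt' : mx S - x - 1 < mx S := by omega
      have := this hlt'
      have hx : mx S - (mx S - x - 1 + 1) = x := by omega
      rwa [hx] at this
  · have : mx S - (d + 1) = mx S - (d+1) := rfl
    exact hd2

lemma sig_eq {S : Finset ℕ} (h : S.Nonempty) (h0 : ∀ x ∈ S, 1 ≤ x) {k : ℕ}
    (hk1 : 1 ≤ k) (hkM : k ≤ mx S)
    (hrun : ∀ x, 1 ≤ x → x ≤ mx S → mx S < x + k → x ∈ S)
    (hout : mx S - k ∉ S) : sig S = k := by
  obtain ⟨h1, h2, h3, h4⟩ := sig_spec h h0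
  rcases lt_trichotomy (sig S) k with hlt | heq | hgt
  · exact absurd (hrun (mx S - sig S) (by omega) (by omega) (by omega)) h4
  · exact heq
  · exact absurd (h3 (mx S - k) (by omega) (by omega) (by omega)) hout

def isU (S : Finset ℕ) : Prop := ∃ a, 1 ≤ a ∧ S = Finset.Icc a (2*a - 1)
def isJ (S : Finset ℕ) : Prop := ∃ a, 1 ≤ a ∧ S = Finset.Icc (a+1) (2*a)

lemma pent_two (j : ℕ) : 2 * pent j = j * (3 * j - 1) := by
  rw [pent]
  rcases Nat.even_or_odd j with ⟨k, hk⟩ | ⟨k, hk⟩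
  · subst hk
    have h : (k + k) * (3 * (k + k) - 1) = 2 * (k * (3 * (k + k) - 1)) := by
      have hkk : k + k = 2 * k := by omega
      rw [hkk, mul_assoc]
    rw [h, Nat.mul_div_cancel_left _ (by norm_num)]
  · subst hk
    have h : (2 * k + 1) * (3 * (2 * k + 1) - 1) = 2 * ((2 * k + 1) * (3 * k + 1)) := by
      have h2 : 3 * (2 * k + 1) - 1 = 2 * (3 * k + 1) := by omega
      rw [h2]; ring
    rw [h, Nat.mul_div_cancel_left _ (by norm_num)]

lemma pent_sq (j : ℕ) (hj : 1 ≤ j) : 24 * pent j + 1 = (6 * j - 1) * (6 * j - 1) := by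
  have h := pent_two j
  have h6 : 6 * j - 1 + 1 = 6 * j := by omega
  nlinarith [h, Nat.sub_add_cancel (by omega : 1 ≤ 6 * j), Nat.sub_add_cancel (by omega : 1 ≤ 3 * j)]

lemma pentj_sq (j : ℕ) : 24 * (pent j + j) + 1 = (6 * j + 1) * (6 * j + 1) := by
  have h := pent_two j
  rcases Nat.eq_zero_or_pos j with rfl | hj
  · simp [pent]
  nlinarith [h, Nat.sub_add_cancel (by omega : 1 ≤ 3 * j)]

lemma pent_inj {i j : ℕ} (hi : 1 ≤ i) (hj : 1 ≤ j) (h : pent i = pent j) : i = j := by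
  have h1 := pent_sq i hi
  have h2 := pent_sq j hj
  have : (6*i - 1) * (6*i-1) = (6*j-1)*(6*j-1) := by omega
  have := Nat.mul_self_inj.mp this
  omega

lemma pentj_inj {i j : ℕ} (h : pent i + i = pent j + j) : i = j := by
  have h1 := pentj_sq i
  have h2 := pentj_sq j
  have : (6*i + 1) * (6*i+1) = (6*j+1)*(6*j+1) := by omega
  have := Nat.mul_self_inj.mp this
  omega

lemma pent_ne_pentj {i j : ℕ} (hi : 1 ≤ i) (hj : 1 ≤ j) : pent i ≠ pent j + j := by
  intro h
  have h1 := pent_sq i hi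
  have h2 := pentj_sq j
  have : (6*i - 1) * (6*i-1) = (6*j+1)*(6*j+1) := by omega
  have := Nat.mul_self_inj.mp this
  omega

lemma le_pent (j : ℕ) (hj : 1 ≤ j) : j ≤ pent j := by
  have h := pent_two j
  have h2 : j * 2 ≤ j * (3 * j - 1) := Nat.mul_le_mul_left j (by omega)
  omega

lemma max_le_pent (j : ℕ) (hj : 1 ≤ j) : 2*j - 1 ≤ pent j := by
  have h := pent_two j
  obtain ⟨k, rfl⟩ : ∃ k, j = k + 1 := ⟨j - 1, by omega⟩
  have h2 : (3*k+1)*k + (4*k+2) = (k+1)*(3*(k+1)-1) := by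
    have h3 : 3*(k+1)-1 = 3*k+2 := by omega
    rw [h3]; ring
  omega

lemma sum_Icc_pent (j : ℕ) (hj : 1 ≤ j) : ∑ i ∈ Finset.Icc j (2*j - 1), i = pent j := by
  have hIcc : Finset.Icc j (2*j-1) = Finset.Ico j (2*j) := by
    rw [← Finset.Ico_add_one_right_eq_Icc]
    congr 1
    omega
  rw [hIcc, Finset.sum_Ico_eq_sum_range]
  have hr : 2*j - j = j := by omega
  rw [hr, Finset.sum_add_distrib, Finset.sum_const, Finset.card_range, smul_eq_mul]
  have h1 := Finset.sum_range_id_mul_two j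
  have h2 := pent_two j
  have a1 : j*(j-1) + j = j*j := by
    obtain ⟨k, rfl⟩ : ∃ k, j = k + 1 := ⟨j - 1, by omega⟩
    simp; ring
  have a2 : j*(3*j-1) + j = 3*(j*j) := by
    obtain ⟨k, rfl⟩ : ∃ k, j = k + 1 := ⟨j - 1, by omega⟩
    have h3 : 3*(k+1)-1 = 3*k+2 := by omega
    rw [h3]; ring
  omega

lemma sum_Icc_pentj (j : ℕ) (hj : 1 ≤ j) :
    ∑ i ∈ Finset.Icc (j+1) (2*j), i = pent j + j := by
  have hIcc : Finset.Icc (j+1) (2*j) = Finset.Ico (j+1) (2*j+1) := by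
    rw [← Finset.Ico_add_one_right_eq_Icc]
  rw [hIcc, Finset.sum_Ico_eq_sum_range]
  have hr : 2*j + 1 - (j+1) = j := by omega
  rw [hr, Finset.sum_add_distrib, Finset.sum_const, Finset.card_range, smul_eq_mul]
  have h1 := Finset.sum_range_id_mul_two j
  have h2 := pent_two j
  have a1 : j*(j-1) + j = j*j := by
    obtain ⟨k, rfl⟩ : ∃ k, j = k + 1 := ⟨j - 1, by omega⟩
    simp; ring
  have a2 : j*(3*j-1) + j = 3*(j*j) := by
    obtain ⟨k, rfl⟩ : ∃ k, j = k + 1 := ⟨j - 1, by omega⟩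
    have h3 : 3*(k+1)-1 = 3*k+2 := by omega
    rw [h3]; ring
  have a3 : j*(j+1) = j*j + j := by ring
  have a4 : (j+1)*j = j*j + j := by ring
  omega

lemma mn_Icc {a b : ℕ} (h : a ≤ b) : mn (Finset.Icc a b) = a :=
  mn_eq (Finset.mem_Icc.mpr ⟨le_refl a, h⟩) (fun x hx => (Finset.mem_Icc.mp hx).1)

lemma mx_Icc {a b : ℕ} (h : a ≤ b) : mx (Finset.Icc a b) = b :=
  mx_eq (Finset.mem_Icc.mpr ⟨h, le_refl b⟩) (fun x hx => (Finset.mem_Icc.mp hx).2)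

lemma sig_Icc {a b : ℕ} (ha : 1 ≤ a) (h : a ≤ b) : sig (Finset.Icc a b) = b + 1 - a := by
  have hne : (Finset.Icc a b).Nonempty := ⟨a, Finset.mem_Icc.mpr ⟨le_refl a, h⟩⟩
  have h0 : ∀ x ∈ Finset.Icc a b, 1 ≤ x := fun x hx => le_trans ha (Finset.mem_Icc.mp hx).1
  refine sig_eq hne h0 (by omega) (by rw [mx_Icc h]; omega) ?_ ?_
  · intro x hx1 hx2 hx3
    rw [mx_Icc h] at *
    rw [Finset.mem_Icc]
    omega
  · rw [mx_Icc h, Finset.mem_Icc]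
    omega


noncomputable def opA (S : Finset ℕ) : Finset ℕ :=
  insert (mx S + 1) ((S.erase (mn S)).erase (mx S + 1 - mn S))

noncomputable def opB (S : Finset ℕ) : Finset ℕ :=
  insert (sig S) (insert (mx S - sig S) (S.erase (mx S)))

lemma keyA {s : ℕ} (S : Finset ℕ)
    (h0 : ∀ x ∈ S, 1 ≤ x) (hsum : S.sum id = s) (hne : S.Nonempty)
    (hU : ¬isU S) (hJ : ¬isJ S) (hA : mn S ≤ sig S) :
    (opA S).sum id = s ∧ (opA S).card + 1 = S.card ∧ (∀ x ∈ opA S, 1 ≤ x) ∧ (opA S).Nonempty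
    ∧ ¬isU (opA S) ∧ ¬isJ (opA S) ∧ sig (opA S) < mn (opA S) ∧ opB (opA S) = S := by
  obtain ⟨hσ1, hσM, hrun, hout⟩ := sig_spec hne h0
  set m := mn S with hm
  set M := mx S with hM
  set σ := sig S with hσ
  have hmS : m ∈ S := mn_mem hne
  have hMS : M ∈ S := mx_mem hne
  have hm1 : 1 ≤ m := h0 _ hmS
  have hmM : m ≤ M := le_mx hne hmS
  have fact1 : M + 1 - m ∈ S := hrun _ (by omega) (by omega) (by omega)
  have fact2 : ¬ (M = 2*m - 1) := by
    intro hMm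
    apply hU
    refine ⟨m, hm1, ?_⟩
    ext x
    rw [Finset.mem_Icc]
    constructor
    · intro hx
      exact ⟨mn_le hne hx, by have := le_mx hne hx; omega⟩
    · intro hx
      exact hrun x (by omega) (by omega) (by omega)
  have fact3 : m < M + 1 - m := by
    have h1 : m ≤ M + 1 - m := mn_le hne fact1
    omega
  have hMnotin : M + 1 ∉ S := fun hc => by have := le_mx hne hc; omega
  have hT2 : ∀ x, x ∈ (S.erase m).erase (M + 1 - m) ↔
      (x ∈ S ∧ x ≠ m ∧ x ≠ M + 1 - m) := by
    intro x
    simp only [Finset.mem_erase]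
    tauto
  have hmemA : ∀ x, x ∈ opA S ↔ (x = M + 1 ∨ (x ∈ S ∧ x ≠ m ∧ x ≠ M + 1 - m)) := by
    intro x
    rw [opA, Finset.mem_insert, ← hm, ← hM]
    rw [hT2 x]
  have hM1T2 : M + 1 ∉ (S.erase m).erase (M + 1 - m) := by
    rw [hT2]; tauto
  have hMm_in_erase : M + 1 - m ∈ S.erase m :=
    Finset.mem_erase.mpr ⟨by omega, fact1⟩
  -- sum
  have hsum' : ∑ x ∈ S, x = s := by rw [← hsum]; rfl
  have e1 : m + ∑ x ∈ S.erase m, x = s := by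
    have h := Finset.add_sum_erase S (fun x => x) hmS
    rw [hsum'] at h
    exact h
  have e2 : (M + 1 - m) + ∑ x ∈ (S.erase m).erase (M + 1 - m), x = ∑ x ∈ S.erase m, x :=
    Finset.add_sum_erase _ (fun x => x) hMm_in_erase
  have hsumA : (opA S).sum id = s := by
    show ∑ x ∈ opA S, x = s
    rw [opA, ← hm, ← hM, Finset.sum_insert hM1T2]
    omega
  -- card
  have hsubpair : ({m, M + 1 - m} : Finset ℕ) ⊆ S := by
    intro x hx
    rcases Finset.mem_insert.mp hx with rfl | hx
    · exact hmS
    · rw [Finset.mem_singleton.mp hx]; exact fact1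
  have hcard2 : 2 ≤ S.card := by
    have := Finset.card_le_card hsubpair
    rwa [Finset.card_pair (by omega)] at this
  have hcardA : (opA S).card + 1 = S.card := by
    rw [opA, ← hm, ← hM, Finset.card_insert_of_notMem hM1T2,
      Finset.card_erase_of_mem hMm_in_erase, Finset.card_erase_of_mem hmS]
    omega
  -- positivity
  have hposA : ∀ x ∈ opA S, 1 ≤ x := by
    intro x hx
    rcases (hmemA x).mp hx with rfl | ⟨hxS, _, _⟩
    · omega
    · exact h0 x hxS
  have hneA : (opA S).Nonempty := ⟨M + 1, (hmemA _).mpr (Or.inl rfl)⟩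
  -- max of opA
  have hmxA : mx (opA S) = M + 1 := by
    refine mx_eq ((hmemA _).mpr (Or.inl rfl)) ?_
    intro x hx
    rcases (hmemA x).mp hx with rfl | ⟨hxS, _, _⟩
    · exact le_rfl
    · have := le_mx hne hxS; omega
  -- sig of opA
  have hsigA : sig (opA S) = m := by
    refine sig_eq hneA hposA hm1 (by rw [hmxA]; omega) ?_ ?_
    · intro x hx1 hx2 hx3
      rw [hmxA] at hx2 hx3
      rcases eq_or_lt_of_le hx2 with heq | hlt
      · exact (hmemA x).mpr (Or.inl heq)
      · refine (hmemA x).mpr (Or.inr ⟨hrun x (by omega) (by omega) (by omega),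
          by omega, by omega⟩)
    · rw [hmxA]
      intro hc
      rcases (hmemA _).mp hc with heq | ⟨_, _, hne3⟩
      · omega
      · exact hne3 rfl
  have hmnA : m < mn (opA S) := by
    have hmem := mn_mem hneA
    rcases (hmemA _).mp hmem with heq | ⟨hxS, hxm, _⟩
    · omega
    · have := mn_le hne hxS
      omega
  -- not exceptional
  have hUA : ¬isU (opA S) := by
    rintro ⟨a, ha1, haEq⟩
    have h1 : mn (opA S) = a := by rw [haEq]; exact mn_Icc (by omega)
    have h2 : sig (opA S) = a := by
      rw [haEq, sig_Icc ha1 (by omega)]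
      omega
    rw [hsigA] at h2
    omega
  have hJA : ¬isJ (opA S) := by
    rintro ⟨a, ha1, haEq⟩
    have h1 : mx (opA S) = 2*a := by rw [haEq]; exact mx_Icc (by omega)
    have h2 : sig (opA S) = a := by
      rw [haEq, sig_Icc (by omega) (by omega)]
      omega
    rw [hsigA] at h2
    rw [hmxA] at h1
    exact fact2 (by omega)
  -- inverse
  have hinv : opB (opA S) = S := by
    rw [opB, hsigA, hmxA]
    have e3 : (opA S).erase (M + 1) = (S.erase m).erase (M + 1 - m) := by
      rw [opA, ← hm, ← hM, Finset.erase_insert hM1T2]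
    rw [e3, Finset.insert_erase hMm_in_erase, Finset.insert_erase hmS]
  exact ⟨hsumA, hcardA, hposA, hneA, hUA, hJA, by rw [hsigA]; exact hmnA, hinv⟩

set_option maxHeartbeats 1000000 in
lemma keyB {s : ℕ} (S : Finset ℕ)
    (h0 : ∀ x ∈ S, 1 ≤ x) (hsum : S.sum id = s) (hne : S.Nonempty)
    (hU : ¬isU S) (hJ : ¬isJ S) (hB : sig S < mn S) :
    (opB S).sum id = s ∧ (opB S).card = S.card + 1 ∧ (∀ x ∈ opB S, 1 ≤ x) ∧ (opB S).Nonempty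
    ∧ ¬isU (opB S) ∧ ¬isJ (opB S) ∧ mn (opB S) ≤ sig (opB S) ∧ opA (opB S) = S := by
  obtain ⟨hσ1, hσM, hrun, hout⟩ := sig_spec hne h0
  set m := mn S with hm
  set M := mx S with hM
  set σ := sig S with hσ
  have hmS : m ∈ S := mn_mem hne
  have hMS : M ∈ S := mx_mem hne
  have hm1 : 1 ≤ m := h0 _ hmS
  have hmM : m ≤ M := le_mx hne hmS
  have fct1 : M + 1 - σ ∈ S := hrun _ (by omega) (by omega) (by omega)
  have fct2 : σ < M + 1 - σ := by
    have := mn_le hne fct1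
    omega
  have fct3 : ¬ (M = 2*σ) := by
    intro hMs
    apply hJ
    refine ⟨σ, hσ1, ?_⟩
    ext x
    rw [Finset.mem_Icc]
    constructor
    · intro hx
      have := mn_le hne hx
      have := le_mx hne hx
      omega
    · intro hx
      exact hrun x (by omega) (by omega) (by omega)
  have hMgt : 2*σ < M := by omega
  have hMerase : M - σ ∉ S.erase M := fun hc => hout (Finset.mem_of_mem_erase hc)
  have hσnot : σ ∉ insert (M - σ) (S.erase M) := by
    intro hc
    rcases Finset.mem_insert.mp hc with heq | hc2
    · omega
    · have := mn_le hne (Finset.mem_of_mem_erase hc2)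
      omega
  have hmemB : ∀ x, x ∈ opB S ↔ (x = σ ∨ x = M - σ ∨ (x ∈ S ∧ x ≠ M)) := by
    intro x
    rw [opB, ← hσ, ← hM, Finset.mem_insert, Finset.mem_insert, Finset.mem_erase]
    tauto
  -- sum
  have hsum' : ∑ x ∈ S, x = s := by rw [← hsum]; rfl
  have e1 : M + ∑ x ∈ S.erase M, x = s := by
    have h := Finset.add_sum_erase S (fun x => x) hMS
    rw [hsum'] at h
    exact h
  have hsumB : (opB S).sum id = s := by
    show ∑ x ∈ opB S, x = s
    rw [opB, ← hσ, ← hM, Finset.sum_insert hσnot, Finset.sum_insert hMerase]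
    omega
  -- card
  have hcardB : (opB S).card = S.card + 1 := by
    rw [opB, ← hσ, ← hM, Finset.card_insert_of_notMem hσnot,
      Finset.card_insert_of_notMem hMerase, Finset.card_erase_of_mem hMS]
    have : 1 ≤ S.card := Finset.card_pos.mpr hne
    omega
  -- positivity
  have hposB : ∀ x ∈ opB S, 1 ≤ x := by
    intro x hx
    rcases (hmemB x).mp hx with rfl | hx2
    · omega
    · rcases hx2 with rfl | ⟨hxS, _⟩
      · omega
      · exact h0 x hxS
  have hneB : (opB S).Nonempty := ⟨σ, (hmemB _).mpr (Or.inl rfl)⟩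
  -- max of opB
  have hM1mem : M - 1 ∈ opB S := by
    rcases eq_or_lt_of_le hσ1 with heq | hgt
    · exact (hmemB _).mpr (Or.inr (Or.inl (by omega)))
    · refine (hmemB _).mpr (Or.inr (Or.inr ⟨hrun (M-1) (by omega) (by omega) (by omega),
        by omega⟩))
  have hmxB : mx (opB S) = M - 1 := by
    refine mx_eq hM1mem ?_
    intro x hx
    rcases (hmemB x).mp hx with rfl | hx2
    · omega
    · rcases hx2 with rfl | ⟨hxS, hxM⟩
      · omega
      · have := le_mx hne hxS
        omega
  have hmnB : mn (opB S) = σ := by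
    refine mn_eq ((hmemB _).mpr (Or.inl rfl)) ?_
    intro x hx
    rcases (hmemB x).mp hx with rfl | hx2
    · omega
    · rcases hx2 with rfl | ⟨hxS, _⟩
      · omega
      · have := mn_le hne hxS
        omega
  -- sig of opB is at least σ
  obtain ⟨hb1, hb2, hb3, hb4⟩ := sig_spec hneB hposB
  have hsigB : σ ≤ sig (opB S) := by
    by_contra hc
    push_neg at hc
    apply hb4
    rw [hmxB] at hb2 ⊢
    have hx0 : M - 1 - sig (opB S) ≥ M - σ := by omega
    rcases eq_or_lt_of_le hx0 with heq | hgt2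
    · exact (hmemB _).mpr (Or.inr (Or.inl heq.symm))
    · refine (hmemB _).mpr (Or.inr (Or.inr ⟨hrun _ (by omega) (by omega) (by omega),
        by omega⟩))
  -- not exceptional
  have hUB : ¬isU (opB S) := by
    rintro ⟨a, ha1, haEq⟩
    have h1 : mn (opB S) = a := by rw [haEq]; exact mn_Icc (by omega)
    have h2 : mx (opB S) = 2*a - 1 := by rw [haEq]; exact mx_Icc (by omega)
    rw [hmnB] at h1
    rw [hmxB] at h2
    omega
  have hJB : ¬isJ (opB S) := by
    rintro ⟨a, ha1, haEq⟩
    have h1 : mn (opB S) = a + 1 := by rw [haEq]; exact mn_Icc (by omega)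
    have h2 : mx (opB S) = 2*a := by rw [haEq]; exact mx_Icc (by omega)
    rw [hmnB] at h1
    rw [hmxB] at h2
    omega
  -- inverse
  have hinv : opA (opB S) = S := by
    rw [opA, hmnB, hmxB]
    have hge1 : 1 ≤ M := by omega
    have hMr : M - 1 + 1 = M := by omega
    rw [hMr]
    have e3 : (opB S).erase σ = insert (M - σ) (S.erase M) := by
      rw [opB, ← hσ, ← hM, Finset.erase_insert hσnot]
    rw [e3, Finset.erase_insert hMerase, Finset.insert_erase hMS]
  exact ⟨hsumB, hcardB, hposB, hneB, hUB, hJB, by rw [hmnB]; exact hsigB, hinv⟩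


open scoped Classical in
noncomputable def Pset (n s : ℕ) : Finset (Finset ℕ) :=
  (Finset.Icc 1 n).powerset.filter (fun S => S.sum id = s)

open scoped Classical in
noncomputable def phi (S : Finset ℕ) : Finset ℕ :=
  if mn S ≤ sig S then opA S else opB S

lemma phi_def (S : Finset ℕ) :
    phi S = if mn S ≤ sig S then opA S else opB S := rfl

lemma neg_one_pow_add {a b : ℕ} (h : a + 1 = b ∨ b + 1 = a) :
    (-1 : ℤ)^a + (-1:ℤ)^b = 0 := by
  rcases h with h | h
  · rw [← h, pow_succ]; ring
  · rw [← h, pow_succ]; ring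

lemma mem_Pset {n s : ℕ} {S : Finset ℕ} :
    S ∈ Pset n s ↔ (S ⊆ Finset.Icc 1 n ∧ S.sum id = s) := by
  rw [Pset, Finset.mem_filter, Finset.mem_powerset]

lemma Pset_pos {n s : ℕ} {S : Finset ℕ} (h : S ∈ Pset n s) : ∀ x ∈ S, 1 ≤ x := by
  intro x hx
  exact (Finset.mem_Icc.mp ((mem_Pset.mp h).1 hx)).1

lemma Pset_nonempty {n s : ℕ} {S : Finset ℕ} (h : S ∈ Pset n s) (hs : 1 ≤ s) :
    S.Nonempty := by
  rcases S.eq_empty_or_nonempty with rfl | hne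
  · have := (mem_Pset.mp h).2
    simp at this
    omega
  · exact hne

lemma mem_Pset_of {n s : ℕ} (hsn : s ≤ n) {S : Finset ℕ}
    (h0 : ∀ x ∈ S, 1 ≤ x) (hsum : S.sum id = s) : S ∈ Pset n s := by
  rw [mem_Pset]
  refine ⟨?_, hsum⟩
  intro x hx
  rw [Finset.mem_Icc]
  refine ⟨h0 x hx, ?_⟩
  have hle : id x ≤ S.sum id := Finset.single_le_sum (fun i _ => Nat.zero_le (id i)) hx
  rw [hsum] at hle
  exact le_trans hle hsn

open scoped Classical in
lemma movable_sum_zero (n s : ℕ) (hs : 1 ≤ s) (hsn : s ≤ n) :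
    ∑ S ∈ (Pset n s).filter (fun S => ¬(isU S ∨ isJ S)), (-1:ℤ)^S.card = 0 := by
  refine Finset.sum_involution (fun S _ => phi S) ?_ ?_ ?_ ?_
  · -- f a + f (phi a) = 0
    intro S hS
    beta_reduce
    rw [Finset.mem_filter] at hS
    obtain ⟨hP, hNE⟩ := hS
    push_neg at hNE
    have h0 := Pset_pos hP
    have hsum := (mem_Pset.mp hP).2
    have hne := Pset_nonempty hP hs
    rw [phi_def]
    by_cases hc : mn S ≤ sig S
    · rw [if_pos hc]
      obtain ⟨_, hcard, _⟩ := keyA S h0 hsum hne hNE.1 hNE.2 hc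
      exact neg_one_pow_add (Or.inr hcard)
    · rw [if_neg hc]
      obtain ⟨_, hcard, _⟩ := keyB S h0 hsum hne hNE.1 hNE.2 (by omega)
      exact neg_one_pow_add (Or.inl hcard.symm)
  · -- phi S ≠ S
    intro S hS _
    beta_reduce
    rw [Finset.mem_filter] at hS
    obtain ⟨hP, hNE⟩ := hS
    push_neg at hNE
    have h0 := Pset_pos hP
    have hsum := (mem_Pset.mp hP).2
    have hne := Pset_nonempty hP hs
    rw [phi_def]
    by_cases hc : mn S ≤ sig S
    · rw [if_pos hc]
      obtain ⟨_, hcard, _⟩ := keyA S h0 hsum hne hNE.1 hNE.2 hc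
      intro heq
      rw [heq] at hcard
      omega
    · rw [if_neg hc]
      obtain ⟨_, hcard, _⟩ := keyB S h0 hsum hne hNE.1 hNE.2 (by omega)
      intro heq
      rw [heq] at hcard
      omega
  · -- phi S ∈ set
    intro S hS
    beta_reduce
    rw [Finset.mem_filter] at hS ⊢
    obtain ⟨hP, hNE⟩ := hS
    push_neg at hNE
    have h0 := Pset_pos hP
    have hsum := (mem_Pset.mp hP).2
    have hne := Pset_nonempty hP hs
    rw [phi_def]
    by_cases hc : mn S ≤ sig S
    · rw [if_pos hc]
      obtain ⟨hsum', _, hpos, _, hU, hJ, _, _⟩ := keyA S h0 hsum hne hNE.1 hNE.2 hc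
      exact ⟨mem_Pset_of hsn hpos hsum', by push_neg; exact ⟨hU, hJ⟩⟩
    · rw [if_neg hc]
      obtain ⟨hsum', _, hpos, _, hU, hJ, _, _⟩ := keyB S h0 hsum hne hNE.1 hNE.2 (by omega)
      exact ⟨mem_Pset_of hsn hpos hsum', by push_neg; exact ⟨hU, hJ⟩⟩
  · -- involution
    intro S hS
    rw [Finset.mem_filter] at hS
    obtain ⟨hP, hNE⟩ := hS
    push_neg at hNE
    have h0 := Pset_pos hP
    have hsum := (mem_Pset.mp hP).2
    have hne := Pset_nonempty hP hs
    show phi (phi S) = S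
    by_cases hc : mn S ≤ sig S
    · have h1 : phi S = opA S := by rw [phi_def, if_pos hc]
      obtain ⟨hsum', _, hpos, hne', hU, hJ, hcond, hinv⟩ := keyA S h0 hsum hne hNE.1 hNE.2 hc
      rw [h1, phi_def, if_neg (by omega), hinv]
    · have h1 : phi S = opB S := by rw [phi_def, if_neg hc]
      obtain ⟨hsum', _, hpos, hne', hU, hJ, hcond, hinv⟩ := keyB S h0 hsum hne hNE.1 hNE.2 (by omega)
      rw [h1, phi_def, if_pos hcond, hinv]

open scoped Classical in
lemma fixedU_eq (n s : ℕ) (hs : 1 ≤ s) (hsn : s ≤ n) :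
    (Pset n s).filter isU
      = ((Finset.Icc 1 s).filter (fun j => pent j = s)).image (fun j => Finset.Icc j (2*j-1)) := by
  ext S
  rw [Finset.mem_filter, Finset.mem_image]
  constructor
  · rintro ⟨hP, a, ha1, rfl⟩
    have hsum := (mem_Pset.mp hP).2
    rw [show (Finset.Icc a (2*a-1)).sum id = ∑ x ∈ Finset.Icc a (2*a-1), x from rfl,
      sum_Icc_pent a ha1] at hsum
    refine ⟨a, ?_, rfl⟩
    rw [Finset.mem_filter, Finset.mem_Icc]
    have := le_pent a ha1
    exact ⟨⟨ha1, by omega⟩, hsum⟩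
  · rintro ⟨j, hj, rfl⟩
    rw [Finset.mem_filter, Finset.mem_Icc] at hj
    obtain ⟨⟨hj1, _⟩, hjp⟩ := hj
    have hub := max_le_pent j hj1
    refine ⟨mem_Pset_of hsn ?_ ?_, ⟨j, hj1, rfl⟩⟩
    · intro x hx
      have := (Finset.mem_Icc.mp hx).1
      omega
    · rw [show (Finset.Icc j (2*j-1)).sum id = ∑ x ∈ Finset.Icc j (2*j-1), x from rfl,
        sum_Icc_pent j hj1, hjp]

open scoped Classical in
lemma fixedJ_eq (n s : ℕ) (hs : 1 ≤ s) (hsn : s ≤ n) :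
    (Pset n s).filter isJ
      = ((Finset.Icc 1 s).filter (fun j => pent j + j = s)).image
          (fun j => Finset.Icc (j+1) (2*j)) := by
  ext S
  rw [Finset.mem_filter, Finset.mem_image]
  constructor
  · rintro ⟨hP, a, ha1, rfl⟩
    have hsum := (mem_Pset.mp hP).2
    rw [show (Finset.Icc (a+1) (2*a)).sum id = ∑ x ∈ Finset.Icc (a+1) (2*a), x from rfl,
      sum_Icc_pentj a ha1] at hsum
    refine ⟨a, ?_, rfl⟩
    rw [Finset.mem_filter, Finset.mem_Icc]
    exact ⟨⟨ha1, by omega⟩, hsum⟩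
  · rintro ⟨j, hj, rfl⟩
    rw [Finset.mem_filter, Finset.mem_Icc] at hj
    obtain ⟨⟨hj1, _⟩, hjp⟩ := hj
    have hub := le_pent j hj1
    refine ⟨mem_Pset_of hsn ?_ ?_, ⟨j, hj1, rfl⟩⟩
    · intro x hx
      have := (Finset.mem_Icc.mp hx).1
      omega
    · rw [show (Finset.Icc (j+1) (2*j)).sum id = ∑ x ∈ Finset.Icc (j+1) (2*j), x from rfl,
        sum_Icc_pentj j hj1, hjp]

open scoped Classical in
lemma franklin (n s : ℕ) (hs : 1 ≤ s) (hsn : s ≤ n) :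
    ∑ S ∈ Pset n s, (-1 : ℤ)^S.card
      = (∑ j ∈ Finset.Icc 1 s, if pent j = s then (-1:ℤ)^j else 0)
        + (∑ j ∈ Finset.Icc 1 s, if pent j + j = s then (-1:ℤ)^j else 0) := by
  rw [← Finset.sum_filter_add_sum_filter_not (Pset n s) (fun S => isU S ∨ isJ S),
    movable_sum_zero n s hs hsn, add_zero]
  rw [Finset.filter_or]
  have hdisj : Disjoint ((Pset n s).filter isU) ((Pset n s).filter isJ) := by
    rw [Finset.disjoint_left]
    intro S hSU hSJ
    rw [Finset.mem_filter] at hSU hSJ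
    obtain ⟨_, a, ha1, haEq⟩ := hSU
    obtain ⟨_, b, hb1, hbEq⟩ := hSJ
    have h1 : mn S = a := by rw [haEq]; exact mn_Icc (by omega)
    have h2 : mx S = 2*a-1 := by rw [haEq]; exact mx_Icc (by omega)
    have h3 : mn S = b+1 := by rw [hbEq]; exact mn_Icc (by omega)
    have h4 : mx S = 2*b := by rw [hbEq]; exact mx_Icc (by omega)
    omega
  rw [Finset.sum_union hdisj, fixedU_eq n s hs hsn, fixedJ_eq n s hs hsn]
  have hU : ∑ S ∈ ((Finset.Icc 1 s).filter (fun j => pent j = s)).image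
      (fun j => Finset.Icc j (2*j-1)), (-1:ℤ)^S.card
      = ∑ j ∈ (Finset.Icc 1 s).filter (fun j => pent j = s), (-1:ℤ)^j := by
    rw [Finset.sum_image]
    · refine Finset.sum_congr rfl fun j hj => ?_
      rw [Finset.mem_filter, Finset.mem_Icc] at hj
      congr 1
      rw [Nat.card_Icc]
      omega
    · intro a ha b hb hab
      rw [Finset.mem_coe, Finset.mem_filter, Finset.mem_Icc] at ha hb
      have h1 : mn (Finset.Icc a (2*a-1)) = a := mn_Icc (by omega)
      have h2 : mn (Finset.Icc b (2*b-1)) = b := mn_Icc (by omega)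
      rw [show Finset.Icc a (2*a-1) = Finset.Icc b (2*b-1) from hab] at h1
      omega
  have hJ : ∑ S ∈ ((Finset.Icc 1 s).filter (fun j => pent j + j = s)).image
      (fun j => Finset.Icc (j+1) (2*j)), (-1:ℤ)^S.card
      = ∑ j ∈ (Finset.Icc 1 s).filter (fun j => pent j + j = s), (-1:ℤ)^j := by
    rw [Finset.sum_image]
    · refine Finset.sum_congr rfl fun j hj => ?_
      rw [Finset.mem_filter, Finset.mem_Icc] at hj
      congr 1
      rw [Nat.card_Icc]
      omega
    · intro a ha b hb hab
      rw [Finset.mem_coe, Finset.mem_filter, Finset.mem_Icc] at ha hb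
      have h1 : mn (Finset.Icc (a+1) (2*a)) = a+1 := mn_Icc (by omega)
      have h2 : mn (Finset.Icc (b+1) (2*b)) = b+1 := mn_Icc (by omega)
      rw [show Finset.Icc (a+1) (2*a) = Finset.Icc (b+1) (2*b) from hab] at h1
      omega
  rw [hU, hJ, Finset.sum_filter, Finset.sum_filter]


lemma cb_term (n t u j : ℕ) (hn : 1 ≤ n) :
    (if u ∈ Finset.range (t+1) then ((-1:ℤ)^j * (((n-1+(t-u)).choose (n-1) : ℕ) : ℤ)) else 0)
      = (-1:ℤ)^j * Cb ((n:ℤ)+t-u-1) ((t:ℤ)-u) := by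
  by_cases h : u ≤ t
  · rw [if_pos (Finset.mem_range.mpr (by omega)), Cb, if_pos (by push_cast; omega)]
    congr 2
    have h1 : ((n:ℤ)+t-u-1).toNat = n - 1 + (t - u) := by omega
    have h2 : ((t:ℤ)-u).toNat = t - u := by omega
    rw [h1, h2]
    have h3 : t - u ≤ n - 1 + (t - u) := by omega
    have h4 := Nat.choose_symm h3
    have h5 : n - 1 + (t - u) - (t - u) = n - 1 := by omega
    rw [h5] at h4
    exact h4
  · rw [if_neg (by simp [Finset.mem_range]; omega), Cb, if_neg (by push_cast; omega)]
    ring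

lemma choose_shift (n t : ℕ) (hn : 1 ≤ n) :
    ((n-1+t).choose (n-1) : ℤ) = ((n + t - 1).choose t : ℤ) := by
  have h1 : n - 1 + t = n + t - 1 := by omega
  rw [h1]
  have h2 := Nat.choose_symm (by omega : t ≤ n + t - 1)
  have h3 : n + t - 1 - t = n - 1 := by omega
  rw [h3] at h2
  rw [h2]

lemma eul_eq_Icc (n : ℕ) :
    eul n = ∏ k ∈ Finset.Icc 1 n, (1 - (PowerSeries.X : PowerSeries ℤ)^k) := by
  induction n with
  | zero => simp [eul]
  | succ n ih =>
    rw [eul, Finset.prod_range_succ, ← eul, ih, Finset.prod_Icc_succ_top (by omega)]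

open scoped Classical in
lemma coeff_eul_eq_sum_Pset (n s : ℕ) :
    (PowerSeries.coeff s) (eul n) = ∑ T ∈ Pset n s, (-1:ℤ)^T.card := by
  rw [eul_eq_Icc]
  have hfac : ∀ k ∈ Finset.Icc 1 n,
      (1 - (PowerSeries.X : PowerSeries ℤ)^k)
        = (-(PowerSeries.X : PowerSeries ℤ)^k) + 1 := by
    intro k _; ring
  rw [Finset.prod_congr rfl hfac, Finset.prod_add]
  have hterm : ∀ T ∈ (Finset.Icc 1 n).powerset,
      (∏ i ∈ T, -(PowerSeries.X : PowerSeries ℤ)^i) * (∏ i ∈ (Finset.Icc 1 n) \ T, 1)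
      = (PowerSeries.C) ((-1:ℤ)^T.card) * (PowerSeries.X : PowerSeries ℤ)^(T.sum id) := by
    intro T _
    rw [Finset.prod_const_one, mul_one]
    have h1 : ∀ i ∈ T, -(PowerSeries.X : PowerSeries ℤ)^i
        = (PowerSeries.C) (-1) * (PowerSeries.X : PowerSeries ℤ)^i := by
      intro i _
      simp
    rw [Finset.prod_congr rfl h1, Finset.prod_mul_distrib, Finset.prod_const,
      ← map_pow, Finset.prod_pow_eq_pow_sum]
    rfl
  rw [Finset.sum_congr rfl hterm, map_sum]
  have hco : ∀ T ∈ (Finset.Icc 1 n).powerset,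
      (PowerSeries.coeff s) ((PowerSeries.C) ((-1:ℤ)^T.card)
          * (PowerSeries.X : PowerSeries ℤ)^(T.sum id))
      = if T.sum id = s then (-1:ℤ)^T.card else 0 := by
    intro T _
    rw [PowerSeries.coeff_C_mul, PowerSeries.coeff_X_pow]
    by_cases h : T.sum id = s
    · rw [if_pos h.symm, if_pos h, mul_one]
    · rw [if_neg (fun hc => h hc.symm), if_neg h, mul_zero]
  rw [Finset.sum_congr rfl hco, Pset, ← Finset.sum_filter]

open scoped Classical in
lemma coeff_eul_formula (n s : ℕ) (hsn : s ≤ n) :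
    (PowerSeries.coeff s) (eul n)
      = (if s = 0 then 1 else 0)
        + (∑ j ∈ Finset.Icc 1 s, if pent j = s then (-1:ℤ)^j else 0)
        + (∑ j ∈ Finset.Icc 1 s, if pent j + j = s then (-1:ℤ)^j else 0) := by
  rw [coeff_eul_eq_sum_Pset]
  rcases Nat.eq_zero_or_pos s with rfl | hs
  · have hP0 : Pset n 0 = {∅} := by
      ext T
      rw [mem_Pset, Finset.mem_singleton]
      constructor
      · rintro ⟨hsub, hsum⟩
        rw [Finset.eq_empty_iff_forall_notMem]
        intro x hx
        have h1 : 1 ≤ x := (Finset.mem_Icc.mp (hsub hx)).1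
        have h2 : id x ≤ T.sum id := Finset.single_le_sum (fun i _ => Nat.zero_le (id i)) hx
        rw [hsum] at h2
        simp at h2
        omega
      · rintro rfl
        exact ⟨Finset.empty_subset _, rfl⟩
    rw [hP0]
    simp
  · rw [franklin n s hs hsn, if_neg (by omega)]
    ring

end NK


/-- Netto–Knuth formula.  Since `u_j ≥ j`, every term with `j > t` has a negative lower
binomial argument, hence vanishes; so the (finite) sums `∑_{j ≥ 1}` may be written as
sums over `1 ≤ j ≤ t`. -/
theorem invNum_pentagonal (n t : ℕ) (hn : 1 ≤ n) (ht : t ≤ n) :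
    (invNum n t : ℤ) =
      ((n + t - 1).choose t : ℤ) +
        (∑ j ∈ Finset.Icc 1 t,
          (-1) ^ j * Cb ((n : ℤ) + t - pent j - j - 1) ((t : ℤ) - pent j - j)) +
        (∑ j ∈ Finset.Icc 1 t,
          (-1) ^ j * Cb ((n : ℤ) + t - pent j - 1) ((t : ℤ) - pent j)) := by
  classical
  have key := NK.invNum_eq_sum_coeff_eul n t hn
  rw [key, Finset.Nat.sum_antidiagonal_eq_sum_range_succ_mk]
  have hco : ∀ k ∈ Finset.range (t+1),
      (PowerSeries.coeff (k, t - k).1) (NK.eul n)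
        * (((n - 1 + (k, t - k).2).choose (n-1) : ℕ) : ℤ)
      = ((if k = 0 then (1:ℤ) else 0)
          + (∑ j ∈ Finset.Icc 1 k, if pent j = k then (-1:ℤ)^j else 0)
          + (∑ j ∈ Finset.Icc 1 k, if pent j + j = k then (-1:ℤ)^j else 0))
        * (((n - 1 + (t - k)).choose (n-1) : ℕ) : ℤ) := by
    intro k hk
    rw [Finset.mem_range] at hk
    rw [NK.coeff_eul_formula n k (by omega)]
  rw [Finset.sum_congr rfl hco]
  have hsplit : ∀ k ∈ Finset.range (t+1),
      ((if k = 0 then (1:ℤ) else 0)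
          + (∑ j ∈ Finset.Icc 1 k, if pent j = k then (-1:ℤ)^j else 0)
          + (∑ j ∈ Finset.Icc 1 k, if pent j + j = k then (-1:ℤ)^j else 0))
        * (((n - 1 + (t - k)).choose (n-1) : ℕ) : ℤ)
      = (if k = 0 then (((n - 1 + (t - k)).choose (n-1) : ℕ) : ℤ) else 0)
          + (∑ j ∈ Finset.Icc 1 t,
              if pent j = k then (-1:ℤ)^j * (((n - 1 + (t - k)).choose (n-1) : ℕ) : ℤ) else 0)
          + (∑ j ∈ Finset.Icc 1 t,
              if pent j + j = k
                then (-1:ℤ)^j * (((n - 1 + (t - k)).choose (n-1) : ℕ) : ℤ) else 0) := by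
    intro k hk
    rw [Finset.mem_range] at hk
    have e1 : ∑ j ∈ Finset.Icc 1 k, (if pent j = k then (-1:ℤ)^j else 0)
        = ∑ j ∈ Finset.Icc 1 t, (if pent j = k then (-1:ℤ)^j else 0) := by
      refine Finset.sum_subset (Finset.Icc_subset_Icc_right (by omega)) ?_
      intro j hj hnj
      rw [Finset.mem_Icc] at hj hnj
      push_neg at hnj
      rw [if_neg]
      intro hc
      have := NK.le_pent j hj.1
      omega
    have e2 : ∑ j ∈ Finset.Icc 1 k, (if pent j + j = k then (-1:ℤ)^j else 0)
        = ∑ j ∈ Finset.Icc 1 t, (if pent j + j = k then (-1:ℤ)^j else 0) := by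
      refine Finset.sum_subset (Finset.Icc_subset_Icc_right (by omega)) ?_
      intro j hj hnj
      rw [Finset.mem_Icc] at hj hnj
      push_neg at hnj
      rw [if_neg]
      intro hc
      have := NK.le_pent j hj.1
      omega
    rw [e1, e2, add_mul, add_mul, Finset.sum_mul, Finset.sum_mul]
    congr 1
    · congr 1
      · split <;> simp
      · refine Finset.sum_congr rfl fun j _ => ?_
        rw [ite_mul, zero_mul]
    · refine Finset.sum_congr rfl fun j _ => ?_
      rw [ite_mul, zero_mul]
  rw [Finset.sum_congr rfl hsplit]
  rw [Finset.sum_add_distrib, Finset.sum_add_distrib]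
  -- T0
  have hT0 : ∑ k ∈ Finset.range (t+1),
      (if k = 0 then (((n - 1 + (t - k)).choose (n-1) : ℕ) : ℤ) else 0)
      = ((n + t - 1).choose t : ℤ) := by
    rw [Finset.sum_ite_eq' (Finset.range (t+1)) 0
      (fun k => (((n - 1 + (t - k)).choose (n-1) : ℕ) : ℤ))]
    rw [if_pos (Finset.mem_range.mpr (by omega))]
    simpa using NK.choose_shift n t hn
  -- TA
  have hTA : ∑ k ∈ Finset.range (t+1), (∑ j ∈ Finset.Icc 1 t,
        if pent j = k then (-1:ℤ)^j * (((n - 1 + (t - k)).choose (n-1) : ℕ) : ℤ) else 0)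
      = ∑ j ∈ Finset.Icc 1 t, (-1:ℤ)^j * Cb ((n : ℤ) + t - pent j - 1) ((t : ℤ) - pent j) := by
    rw [Finset.sum_comm]
    refine Finset.sum_congr rfl fun j _ => ?_
    have h1 : ∀ k ∈ Finset.range (t+1),
        (if pent j = k then (-1:ℤ)^j * (((n - 1 + (t - k)).choose (n-1) : ℕ) : ℤ) else 0)
        = (if pent j = k
            then (fun u => (-1:ℤ)^j * (((n - 1 + (t - u)).choose (n-1) : ℕ) : ℤ)) k else 0) := by
      intro k _; rfl
    rw [Finset.sum_congr rfl h1, Finset.sum_ite_eq (Finset.range (t+1)) (pent j)]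
    exact NK.cb_term n t (pent j) j hn
  -- TB
  have hTB : ∑ k ∈ Finset.range (t+1), (∑ j ∈ Finset.Icc 1 t,
        if pent j + j = k then (-1:ℤ)^j * (((n - 1 + (t - k)).choose (n-1) : ℕ) : ℤ) else 0)
      = ∑ j ∈ Finset.Icc 1 t,
          (-1:ℤ)^j * Cb ((n : ℤ) + t - pent j - j - 1) ((t : ℤ) - pent j - j) := by
    rw [Finset.sum_comm]
    refine Finset.sum_congr rfl fun j _ => ?_
    have h1 : ∀ k ∈ Finset.range (t+1),
        (if pent j + j = k then (-1:ℤ)^j * (((n - 1 + (t - k)).choose (n-1) : ℕ) : ℤ) else 0)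
        = (if pent j + j = k
            then (fun u => (-1:ℤ)^j * (((n - 1 + (t - u)).choose (n-1) : ℕ) : ℤ)) k else 0) := by
      intro k _; rfl
    rw [Finset.sum_congr rfl h1, Finset.sum_ite_eq (Finset.range (t+1)) (pent j + j)]
    have h2 := NK.cb_term n t (pent j + j) j hn
    rw [h2]
    congr 2
    · push_cast; ring
    · push_cast; ring
  rw [hT0, hTA, hTB]
  ring
end

section
/- Let n ≥ 1 be an integer, let p₁ < p₂ < … < p_{n−1} be distinct primes, and set k = p₁¹ · p₂² · … · p_{n−1}^{n−1}. Then for every integer 0 ≤ t ≤ C(n,2), the number of divisors d of k with Ω(d) = t (where Ω counts prime factors with multiplicity) equals I_n(t). -/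
open Finset

/-- Count of bounded codes (Lehmer codes) with given sum. -/
def codeCount (m t : ℕ) : ℕ :=
  ((Fintype.piFinset fun i : Fin m => Finset.range ((i : ℕ) + 2)).filter
    (fun f => ∑ i, f i = t)).card

lemma codeCount_zero (t : ℕ) : codeCount 0 t = if t = 0 then 1 else 0 := by
  unfold codeCount
  by_cases h : t = 0
  · subst h
    rw [if_pos rfl, Finset.filter_true_of_mem (by simp), Fintype.card_piFinset]
    simp
  · rw [if_neg h, Finset.card_eq_zero, Finset.filter_eq_empty_iff]
    intro f _
    simpa using fun h0 => h h0.symm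

lemma codeCount_succ (m t : ℕ) :
    codeCount (m + 1) t = ∑ j ∈ Finset.range (m + 2), if j ≤ t then codeCount m (t - j) else 0 := by
  unfold codeCount
  rw [Finset.card_eq_sum_card_fiberwise
    (f := fun f : Fin (m + 1) → ℕ => f (Fin.last m)) (t := Finset.range (m + 2))
    (fun f hf => by
      have := (Fintype.mem_piFinset.mp (Finset.mem_filter.mp hf).1) (Fin.last m)
      simpa using this)]
  refine Finset.sum_congr rfl fun j hj => ?_
  rw [Finset.mem_range] at hj
  by_cases hjt : j ≤ t
  · rw [if_pos hjt]
    refine Finset.card_nbij' (fun f => f ∘ Fin.castSucc) (fun g => Fin.snoc g j) ?_ ?_ ?_ ?_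
    · intro f hf
      simp only [Finset.mem_coe, Finset.mem_filter, Finset.mem_filter, Fintype.mem_piFinset] at hf ⊢
      obtain ⟨⟨h1, h2⟩, h3⟩ := hf
      refine ⟨fun i => by simpa using h1 i.castSucc, ?_⟩
      rw [Fin.sum_univ_castSucc] at h2
      simp only [Function.comp]
      omega
    · intro g hg
      simp only [Finset.mem_coe, Finset.mem_filter, Fintype.mem_piFinset] at hg ⊢
      obtain ⟨h1, h2⟩ := hg
      refine ⟨⟨fun i => ?_, ?_⟩, by simp⟩
      · induction i using Fin.lastCases with
        | last => simpa using hj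
        | cast i => simpa using h1 i
      · rw [Fin.sum_univ_castSucc]
        simp only [Fin.snoc_castSucc, Fin.snoc_last]
        omega
    · intro f hf
      simp only [Finset.mem_coe, Finset.mem_filter] at hf
      funext i
      induction i using Fin.lastCases with
      | last => simp [hf.2]
      | cast i => simp
    · intro g _
      funext i
      simp
  · rw [if_neg hjt, Finset.card_eq_zero, Finset.filter_eq_empty_iff]
    rintro f hf
    simp only [Finset.mem_filter] at hf
    rintro ⟨h2, h3⟩
    have : f (Fin.last m) ≤ ∑ i, f i :=
      Finset.single_le_sum (fun i _ => Nat.zero_le _) (Finset.mem_univ _)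
    omega

noncomputable def insertPerm {n : ℕ} (p : Fin (n + 1)) (σ : Equiv.Perm (Fin n)) :
    Equiv.Perm (Fin (n + 1)) :=
  Equiv.ofBijective (Fin.snoc (fun i => p.succAbove (σ i)) p) <| by
    rw [Fintype.bijective_iff_injective_and_card]
    refine ⟨fun x y h => ?_, rfl⟩
    induction x using Fin.lastCases with
    | last =>
      induction y using Fin.lastCases with
      | last => rfl
      | cast j =>
        simp only [Fin.snoc_last, Fin.snoc_castSucc] at h
        exact absurd h.symm (Fin.succAbove_ne p (σ j))
    | cast i =>
      induction y using Fin.lastCases with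
      | last =>
        simp only [Fin.snoc_last, Fin.snoc_castSucc] at h
        exact absurd h (Fin.succAbove_ne p (σ i))
      | cast j =>
        simp only [Fin.snoc_castSucc] at h
        have := σ.injective (Fin.succAbove_right_injective h)
        rw [this]

@[simp] lemma insertPerm_apply_last {n : ℕ} (p : Fin (n + 1)) (σ : Equiv.Perm (Fin n)) :
    insertPerm p σ (Fin.last n) = p := by
  simp [insertPerm]

@[simp] lemma insertPerm_apply_castSucc {n : ℕ} (p : Fin (n + 1)) (σ : Equiv.Perm (Fin n))
    (i : Fin n) : insertPerm p σ i.castSucc = p.succAbove (σ i) := by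
  simp [insertPerm]

lemma invCount_insertPerm {n : ℕ} (p : Fin (n + 1)) (σ : Equiv.Perm (Fin n)) :
    invCount (insertPerm p σ) = (n - (p : ℕ)) + invCount σ := by
  show ((Finset.univ : Finset (Fin (n + 1) × Fin (n + 1))).filter
      (fun x => x.1 < x.2 ∧ insertPerm p σ x.2 < insertPerm p σ x.1)).card
      = (n - (p : ℕ)) + invCount σ
  rw [← Finset.card_filter_add_card_filter_not
    (p := fun x : Fin (n + 1) × Fin (n + 1) => x.2 = Fin.last n), Finset.filter_filter,
    Finset.filter_filter]
  congr 1
  · -- pairs with second coordinate `last`: card = n - p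
    have h1 : ((Finset.univ : Finset (Fin (n + 1) × Fin (n + 1))).filter
        (fun x => (x.1 < x.2 ∧ insertPerm p σ x.2 < insertPerm p σ x.1) ∧ x.2 = Fin.last n)).card
        = ((Finset.univ : Finset (Fin n)).filter (fun a => (p : ℕ) ≤ ((σ a : Fin n) : ℕ))).card := by
      rw [eq_comm]
      refine Finset.card_bij (fun a _ => (a.castSucc, Fin.last n)) ?_ ?_ ?_
      · intro a ha
        simp only [Finset.mem_filter, Finset.mem_univ, true_and] at ha ⊢
        refine ⟨⟨Fin.castSucc_lt_last a, ?_⟩, trivial⟩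
        rw [insertPerm_apply_last, insertPerm_apply_castSucc,
          Fin.lt_succAbove_iff_le_castSucc]
        rwa [Fin.le_def]
      · intro a _ b _ h
        exact Fin.castSucc_injective n (congrArg Prod.fst h)
      · rintro ⟨x, y⟩ hx
        simp only [Finset.mem_filter, Finset.mem_univ, true_and] at hx
        obtain ⟨⟨hlt, hinv⟩, rfl⟩ := hx
        obtain ⟨a, rfl⟩ := Fin.exists_castSucc_eq.mpr hlt.ne
        refine ⟨a, ?_, rfl⟩
        simp only [Finset.mem_filter, Finset.mem_univ, true_and]
        rw [insertPerm_apply_last, insertPerm_apply_castSucc,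
          Fin.lt_succAbove_iff_le_castSucc, Fin.le_def] at hinv
        exact hinv
    have h2 : ((Finset.univ : Finset (Fin n)).filter
        (fun a => (p : ℕ) ≤ ((σ a : Fin n) : ℕ))).card
        = ((Finset.univ : Finset (Fin n)).filter (fun j : Fin n => (p : ℕ) ≤ (j : ℕ))).card := by
      refine Finset.card_equiv σ fun a => ?_
      simp
    have h3 : ((Finset.univ : Finset (Fin n)).filter (fun j : Fin n => (p : ℕ) ≤ (j : ℕ))).card
        = n - (p : ℕ) := by
      rw [← Nat.card_Ico (p : ℕ) n]
      refine Finset.card_bij (fun (j : Fin n) _ => (j : ℕ)) ?_ ?_ ?_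
      · intro a ha
        simp only [Finset.mem_filter, Finset.mem_univ, true_and] at ha
        exact Finset.mem_Ico.mpr ⟨ha, a.isLt⟩
      · intro a _ b _ h
        exact Fin.val_injective h
      · intro b hb
        rw [Finset.mem_Ico] at hb
        exact ⟨⟨b, hb.2⟩, by simp [hb.1], rfl⟩
    rw [h1, h2, h3]
  · -- pairs with second coordinate not last: card = invCount σ
    rw [eq_comm]
    unfold invCount
    refine Finset.card_bij (fun x _ => (x.1.castSucc, x.2.castSucc)) ?_ ?_ ?_
    · intro x hx
      simp only [Finset.mem_filter, Finset.mem_univ, true_and] at hx ⊢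
      refine ⟨⟨by simpa using hx.1, ?_⟩, (Fin.castSucc_lt_last x.2).ne⟩
      rw [insertPerm_apply_castSucc, insertPerm_apply_castSucc,
        Fin.succAbove_lt_succAbove_iff]
      exact hx.2
    · intro a _ b _ h
      have h1 := Fin.castSucc_injective n (congrArg Prod.fst h)
      have h2 := Fin.castSucc_injective n (congrArg Prod.snd h)
      exact Prod.ext h1 h2
    · rintro ⟨x, y⟩ hx
      simp only [Finset.mem_filter, Finset.mem_univ, true_and] at hx
      obtain ⟨⟨hlt, hinv⟩, hne⟩ := hx
      obtain ⟨b, rfl⟩ := Fin.exists_castSucc_eq.mpr hne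
      obtain ⟨a, rfl⟩ := Fin.exists_castSucc_eq.mpr (hlt.trans (Fin.castSucc_lt_last b)).ne
      refine ⟨(a, b), ?_, rfl⟩
      simp only [Finset.mem_filter, Finset.mem_univ, true_and]
      rw [insertPerm_apply_castSucc, insertPerm_apply_castSucc,
        Fin.succAbove_lt_succAbove_iff] at hinv
      exact ⟨by simpa using hlt, hinv⟩

lemma invNum_succ (m t : ℕ) :
    invNum (m + 2) t = ∑ j ∈ Finset.range (m + 2), if j ≤ t then invNum (m + 1) (t - j) else 0 := by
  have hF : Function.Bijective
      (fun x : Fin (m + 2) × Equiv.Perm (Fin (m + 1)) => insertPerm x.1 x.2) := by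
    rw [Fintype.bijective_iff_injective_and_card]
    constructor
    · rintro ⟨p, σ⟩ ⟨q, τ⟩ h
      simp only at h
      have h1 : p = q := by
        have := congrArg (fun π : Equiv.Perm (Fin (m + 2)) => π (Fin.last (m + 1))) h
        simpa using this
      subst h1
      have h2 : σ = τ := by
        ext i
        have := congrArg (fun π : Equiv.Perm (Fin (m + 2)) => π (Fin.castSucc i)) h
        simp only [insertPerm_apply_castSucc] at this
        exact congrArg Fin.val (Fin.succAbove_right_injective this)
      rw [h2]
    · simp [Fintype.card_perm, Nat.factorial_succ]
  have step1 : invNum (m + 2) t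
      = ((Finset.univ : Finset (Fin (m + 2) × Equiv.Perm (Fin (m + 1)))).filter
        (fun x => (m + 1 - (x.1 : ℕ)) + invCount x.2 = t)).card := by
    rw [invNum, eq_comm]
    refine Finset.card_equiv (Equiv.ofBijective _ hF) fun x => ?_
    simp only [Finset.mem_filter, Finset.mem_univ, true_and, Equiv.ofBijective_apply]
    rw [invCount_insertPerm]
  rw [step1, Finset.card_eq_sum_card_fiberwise (f := fun x => x.1) (t := Finset.univ)
    (fun x _ => Finset.mem_univ _)]
  have fib : ∀ q : Fin (m + 2),
      (((Finset.univ : Finset (Fin (m + 2) × Equiv.Perm (Fin (m + 1)))).filter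
        (fun x => (m + 1 - (x.1 : ℕ)) + invCount x.2 = t)).filter (fun x => x.1 = q)).card
      = if m + 1 - (q : ℕ) ≤ t then invNum (m + 1) (t - (m + 1 - (q : ℕ))) else 0 := by
    intro q
    by_cases hq : m + 1 - (q : ℕ) ≤ t
    · rw [if_pos hq, invNum, eq_comm]
      refine Finset.card_bij (fun σ _ => (q, σ)) ?_ ?_ ?_
      · intro σ hσ
        simp only [Finset.mem_filter, Finset.mem_univ, true_and] at hσ ⊢
        exact ⟨by omega, trivial⟩
      · intro a _ b _ h
        exact congrArg Prod.snd h
      · rintro ⟨p, σ⟩ hx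
        simp only [Finset.mem_filter, Finset.mem_univ, true_and] at hx
        obtain ⟨hsum, rfl⟩ := hx
        refine ⟨σ, ?_, rfl⟩
        simp only [Finset.mem_filter, Finset.mem_univ, true_and]
        omega
    · rw [if_neg hq, Finset.card_eq_zero, Finset.filter_eq_empty_iff]
      intro x hx
      simp only [Finset.mem_filter, Finset.mem_univ, true_and] at hx
      intro h1
      rw [h1] at hx
      omega
  simp only [fib]
  have hrev : ∀ q : Fin (m + 2),
      (if m + 1 - (q : ℕ) ≤ t then invNum (m + 1) (t - (m + 1 - (q : ℕ))) else 0)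
      = (fun j : ℕ => if j ≤ t then invNum (m + 1) (t - j) else 0) ((q.rev : ℕ)) := by
    intro q
    have : (q.rev : ℕ) = m + 1 - (q : ℕ) := by
      rw [Fin.val_rev]; omega
    rw [this]
  simp only [hrev]
  rw [Fintype.sum_equiv Fin.revPerm
    (fun q : Fin (m + 2) => (fun j : ℕ => if j ≤ t then invNum (m + 1) (t - j) else 0) ((q.rev : ℕ)))
    (fun q : Fin (m + 2) => (fun j : ℕ => if j ≤ t then invNum (m + 1) (t - j) else 0) ((q : ℕ)))
    (fun q => by simp)]
  exact Fin.sum_univ_eq_sum_range (fun j => if j ≤ t then invNum (m + 1) (t - j) else 0) (m + 2)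

lemma omega_prod {ι : Type*} (s : Finset ι) (g : ι → ℕ) (hg : ∀ i ∈ s, g i ≠ 0) :
    ArithmeticFunction.cardFactors (∏ i ∈ s, g i)
      = ∑ i ∈ s, ArithmeticFunction.cardFactors (g i) := by
  classical
  induction s using Finset.induction_on with
  | empty => simp
  | @insert a s ha ih =>
    rw [Finset.prod_insert ha, Finset.sum_insert ha,
      ArithmeticFunction.cardFactors_mul (hg a (Finset.mem_insert_self a s))
        (Finset.prod_ne_zero_iff.mpr fun i hi => hg i (Finset.mem_insert_of_mem hi)),
      ih fun i hi => hg i (Finset.mem_insert_of_mem hi)]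

lemma factorization_prod_pow {m : ℕ} {p : Fin m → ℕ} (hp : ∀ i, (p i).Prime)
    (hinj : Function.Injective p) (f : Fin m → ℕ) (j : Fin m) :
    (∏ i, p i ^ f i).factorization (p j) = f j := by
  rw [Nat.factorization_prod (fun i _ => pow_ne_zero _ (hp i).ne_zero)]
  rw [Finset.sum_apply']
  rw [Finset.sum_eq_single j]
  · rw [(hp j).factorization_pow, Finsupp.single_eq_same]
  · intro i _ hij
    rw [(hp i).factorization_pow, Finsupp.single_eq_of_ne' (fun h => hij (hinj h))]
  · simp

lemma eq_prod_pow_factorization {m : ℕ} {p : Fin m → ℕ}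
    (hinj : Function.Injective p) {d : ℕ} (hd0 : d ≠ 0)
    (hdvd : ∀ q : ℕ, q.Prime → q ∣ d → ∃ i, q = p i) :
    ∏ i, p i ^ d.factorization (p i) = d := by
  have hsub : d.factorization.support ⊆ Finset.image p Finset.univ := by
    intro q hq
    rw [Nat.support_factorization, Nat.mem_primeFactors] at hq
    obtain ⟨i, rfl⟩ := hdvd q hq.1 hq.2.1
    exact Finset.mem_image.mpr ⟨i, Finset.mem_univ i, rfl⟩
  conv_rhs => rw [← Nat.factorization_prod_pow_eq_self hd0]
  rw [Finsupp.prod_of_support_subset _ hsub (fun q e => q ^ e) (fun q _ => pow_zero q),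
    Finset.prod_image fun a _ b _ h => hinj h]

lemma card_divisors_eq_codeCount (m : ℕ) (p : Fin m → ℕ) (hp : ∀ i, (p i).Prime)
    (hinj : Function.Injective p) (t : ℕ) :
    ((∏ i, p i ^ ((i : ℕ) + 1)).divisors.filter
        (fun d => d.primeFactorsList.length = t)).card = codeCount m t := by
  have hk0 : (∏ i, p i ^ ((i : ℕ) + 1)) ≠ 0 :=
    Finset.prod_ne_zero_iff.mpr fun i _ => pow_ne_zero _ (hp i).ne_zero
  have hps : ∀ (d : ℕ), d ∣ (∏ i, p i ^ ((i : ℕ) + 1)) → d ≠ 0 →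
      ∏ i, p i ^ d.factorization (p i) = d := by
    intro d hd hd0
    refine eq_prod_pow_factorization hinj hd0 fun q hq hqd => ?_
    obtain ⟨i, _, hi⟩ := hq.prime.exists_mem_finset_dvd (hqd.trans hd)
    exact ⟨i, (Nat.prime_dvd_prime_iff_eq hq (hp i)).mp (hq.dvd_of_dvd_pow hi)⟩
  unfold codeCount
  refine Finset.card_bij' (fun d _ => fun i => d.factorization (p i))
    (fun f _ => ∏ i, p i ^ f i) ?_ ?_ ?_ ?_
  · intro d hd
    rw [Finset.mem_filter, Nat.mem_divisors] at hd
    obtain ⟨⟨hdvd, _⟩, hlen⟩ := hd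
    have hd0 : d ≠ 0 := by rintro rfl; exact hk0 (Nat.eq_zero_of_zero_dvd hdvd)
    rw [Finset.mem_filter]
    constructor
    · rw [Fintype.mem_piFinset]
      intro i
      rw [Finset.mem_range]
      show d.factorization (p i) < (i : ℕ) + 2
      have hle := (Nat.factorization_le_iff_dvd hd0 hk0).mpr hdvd
      have h1 := Finsupp.le_def.mp hle (p i)
      have hk1 : (∏ i, p i ^ ((i : ℕ) + 1)).factorization (p i) = (i : ℕ) + 1 :=
        factorization_prod_pow hp hinj _ i
      omega
    · have hsum : (∑ i, d.factorization (p i)) = ArithmeticFunction.cardFactors d := by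
        conv_rhs => rw [← hps d hdvd hd0]
        rw [omega_prod Finset.univ _ (fun i _ => pow_ne_zero _ (hp i).ne_zero)]
        exact Finset.sum_congr rfl fun i _ =>
          (ArithmeticFunction.cardFactors_apply_prime_pow (hp i)).symm
      rw [hsum, ArithmeticFunction.cardFactors_apply, hlen]
  · intro f hf
    rw [Finset.mem_filter, Fintype.mem_piFinset] at hf
    obtain ⟨h1, h2⟩ := hf
    rw [Finset.mem_filter, Nat.mem_divisors]
    refine ⟨⟨?_, hk0⟩, ?_⟩
    · refine Finset.prod_dvd_prod_of_dvd _ _ fun i _ => pow_dvd_pow _ ?_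
      have := Finset.mem_range.mp (h1 i)
      omega
    · rw [← ArithmeticFunction.cardFactors_apply,
        omega_prod Finset.univ _ (fun i _ => pow_ne_zero _ (hp i).ne_zero), ← h2]
      exact Finset.sum_congr rfl fun i _ => ArithmeticFunction.cardFactors_apply_prime_pow (hp i)
  · intro d hd
    rw [Finset.mem_filter, Nat.mem_divisors] at hd
    have hd0 : d ≠ 0 := by rintro rfl; exact hk0 (Nat.eq_zero_of_zero_dvd hd.1.1)
    exact hps d hd.1.1 hd0
  · intro f _
    funext i
    exact factorization_prod_pow hp hinj f i

lemma invNum_one (t : ℕ) : invNum 1 t = if t = 0 then 1 else 0 := by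
  have h0 : ∀ π : Equiv.Perm (Fin 1), invCount π = 0 := by
    intro π
    rw [invCount, Finset.card_eq_zero, Finset.filter_eq_empty_iff]
    rintro ⟨a, b⟩ _
    simp [Subsingleton.elim a b]
  rw [invNum]
  by_cases h : t = 0
  · subst h
    rw [if_pos rfl, Finset.filter_true_of_mem (fun π _ => h0 π), Finset.card_univ,
      Fintype.card_perm]
    simp
  · rw [if_neg h, Finset.card_eq_zero, Finset.filter_eq_empty_iff]
    intro π _
    rw [h0 π]
    exact fun hh => h hh.symm

lemma invNum_eq_codeCount (m t : ℕ) : invNum (m + 1) t = codeCount m t := by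
  induction m generalizing t with
  | zero => rw [invNum_one, codeCount_zero]
  | succ m ih =>
    rw [invNum_succ, codeCount_succ]
    exact Finset.sum_congr rfl fun j _ => by by_cases hj : j ≤ t <;> simp [hj, ih]

/-- Rank sizes of the divisor lattice `D_k` for `k = p₁¹ ⋯ p_{n−1}^{n−1}`:
the number of divisors `m` of `k` with `Ω(m) = t` equals `I_n(t)`.
Here `Ω(m) = m.primeFactorsList.length` counts prime factors with multiplicity. -/
theorem card_divisors_bigOmega_eq_invNum (n : ℕ) (hn : 1 ≤ n)
    (p : Fin (n - 1) → ℕ) (hp : ∀ i, (p i).Prime) (hmono : StrictMono p)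
    (t : ℕ) (ht : t ≤ n.choose 2) :
    ((∏ i, p i ^ ((i : ℕ) + 1)).divisors.filter
        (fun m => m.primeFactorsList.length = t)).card = invNum n t := by
  obtain ⟨m, rfl⟩ : ∃ m, n = m + 1 := ⟨n - 1, (Nat.succ_pred_eq_of_pos hn).symm⟩
  rw [invNum_eq_codeCount]
  exact card_divisors_eq_codeCount m p hp hmono.injective t
end
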